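/- arXiv:2305.04770 — 6 statements merged into one kernel-verified Lean document; each statement's English description precedes it below -/
import Mathlib

section
/- Let (V, ℓ) be a finite-dimensional non-Archimedean normed vector space over a field k with trivial valuation, and let (v_1,…,v_n) and (w_1,…,w_n) be two orthogonal bases of V with ℓ(v_1) ≤ ℓ(v_2) ≤ … ≤ ℓ(v_n) and ℓ(w_1) ≤ ℓ(w_2) ≤ … ≤ ℓ(w_n). Then ℓ(v_i) = ℓ(w_i) for all i = 1,…,n. -/
open Classical

theorem key_rank {k V : Type*} [Field k] [AddCommGroup V] [Module k V]
    (ℓ : V → EReal)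
    (hsmul : ∀ (a : k) (x : V), a ≠ 0 → ℓ (a • x) = ℓ x)
    {n : ℕ} (v : Fin n → V)
    (hvli : LinearIndependent k v)
    (hvsp : Submodule.span k (Set.range v) = ⊤)
    (hvorth : ∀ a : Fin n → k,
      ℓ (∑ i, a i • v i) =
        (Finset.univ.filter fun i => a i ≠ 0).sup fun i => ℓ (a i • v i))
    (c : EReal) (W : Submodule k V) (hW : ∀ x, x ∈ W ↔ ℓ x ≤ c) :
    Module.finrank k W = (Finset.univ.filter fun i : Fin n => ℓ (v i) ≤ c).card := by
  classical
  set S : Set (Fin n) := {i | ℓ (v i) ≤ c} with hS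
  have hspan : Submodule.span k (v '' S) = W := by
    apply le_antisymm
    · rw [Submodule.span_le]
      rintro x ⟨i, hi, rfl⟩
      exact (hW _).mpr hi
    · intro x hx
      have hxc : ℓ x ≤ c := (hW x).mp hx
      let b : Module.Basis (Fin n) k V := Module.Basis.mk hvli hvsp.ge
      have hb : ∀ i, b i = v i := fun i => Module.Basis.mk_apply hvli hvsp.ge i
      set a : Fin n → k := fun i => b.repr x i with ha
      have hsum : ∑ i, a i • v i = x := by
        simpa [hb] using b.sum_repr x
      have horth := hvorth a
      rw [hsum] at horth
      have hcoef : ∀ i, a i ≠ 0 → ℓ (v i) ≤ c := by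
        intro i hi
        have hmem : i ∈ Finset.univ.filter fun i => a i ≠ 0 := by
          simp [hi]
        have := Finset.le_sup (f := fun i => ℓ (a i • v i)) hmem
        rw [← horth] at this
        calc ℓ (v i) = ℓ (a i • v i) := (hsmul _ _ hi).symm
          _ ≤ ℓ x := this
          _ ≤ c := hxc
      rw [← hsum]
      apply Submodule.sum_mem
      intro i _
      by_cases hi : a i = 0
      · simp [hi]
      · exact Submodule.smul_mem _ _ (Submodule.subset_span ⟨i, hcoef i hi, rfl⟩)
  rw [← hspan]
  have hliS : LinearIndependent k (fun i : S => v i) :=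
    hvli.comp Subtype.val Subtype.val_injective
  have hrange : Set.range (fun i : S => v i) = v '' S := by
    rw [← Set.image_eq_range]
  haveI : Fintype S := Set.Finite.fintype (Set.toFinite S)
  have := finrank_span_eq_card (R := k) hliS
  rw [hrange] at this
  rw [this]
  rw [← Fintype.card_subtype]
  congr 1
  exact Subsingleton.elim _ _

theorem count_eq {n : ℕ} (f g : Fin n → EReal) (hf : Monotone f) (hg : Monotone g)
    (h : ∀ c, (Finset.univ.filter fun j => f j ≤ c).card =
      (Finset.univ.filter fun j => g j ≤ c).card)
    (i : Fin n) : ¬ f i < g i := by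
  intro hlt
  have h1 : Finset.Iic i ⊆ Finset.univ.filter fun j => f j ≤ f i := by
    intro j hj
    simp only [Finset.mem_filter, Finset.mem_univ, true_and]
    exact hf (Finset.mem_Iic.mp hj)
  have h2 : (Finset.univ.filter fun j => g j ≤ f i) ⊆ Finset.Iio i := by
    intro j hj
    simp only [Finset.mem_filter, Finset.mem_univ, true_and] at hj
    rw [Finset.mem_Iio]
    by_contra hij
    exact absurd (lt_of_le_of_lt ((hg (not_lt.mp hij)).trans hj) hlt) (lt_irrefl _)
  have := (Finset.card_le_card h1).trans
    (((h (f i)).le).trans (Finset.card_le_card h2))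
  rw [Fin.card_Iic, Fin.card_Iio] at this
  omega

/-- Let `(V, ℓ)` be a finite-dimensional non-Archimedean normed vector space
over a field `k` with trivial valuation (so `ℓ (a • x) = ℓ x` for nonzero scalars `a`,
`ℓ x = ⊥` iff `x = 0`, and `ℓ (x + y) ≤ max (ℓ x) (ℓ y)`).  If `(v 0, …, v (n-1))` and
`(w 0, …, w (n-1))` are two orthogonal bases of `V` with `ℓ (v i)` and `ℓ (w i)` nondecreasing
in `i`, then `ℓ (v i) = ℓ (w i)` for all `i`. -/
theorem stmt_0 {k V : Type*} [Field k] [AddCommGroup V] [Module k V]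
    (ℓ : V → EReal)
    (hbot : ∀ x : V, ℓ x = ⊥ ↔ x = 0)
    (hsmul : ∀ (a : k) (x : V), a ≠ 0 → ℓ (a • x) = ℓ x)
    (hadd : ∀ x y : V, ℓ (x + y) ≤ max (ℓ x) (ℓ y))
    {n : ℕ} (v w : Fin n → V)
    (hvli : LinearIndependent k v)
    (hvsp : Submodule.span k (Set.range v) = ⊤)
    (hwli : LinearIndependent k w)
    (hwsp : Submodule.span k (Set.range w) = ⊤)
    (hvorth : ∀ a : Fin n → k,
      ℓ (∑ i, a i • v i) =
        (Finset.univ.filter fun i => a i ≠ 0).sup fun i => ℓ (a i • v i))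
    (hworth : ∀ a : Fin n → k,
      ℓ (∑ i, a i • w i) =
        (Finset.univ.filter fun i => a i ≠ 0).sup fun i => ℓ (a i • w i))
    (hvmono : Monotone fun i => ℓ (v i))
    (hwmono : Monotone fun i => ℓ (w i)) :
    ∀ i, ℓ (v i) = ℓ (w i) := by
  have hcount : ∀ c : EReal,
      (Finset.univ.filter fun j : Fin n => ℓ (v j) ≤ c).card =
        (Finset.univ.filter fun j : Fin n => ℓ (w j) ≤ c).card := by
    intro c
    set W : Submodule k V :=
      { carrier := {x | ℓ x ≤ c}
        zero_mem' := by
          have : ℓ (0 : V) = ⊥ := (hbot 0).mpr rfl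
          simp [this]
        add_mem' := by
          intro x y hx hy
          exact (hadd x y).trans (max_le hx hy)
        smul_mem' := by
          intro a x hx
          by_cases ha : a = 0
          · have : ℓ (0 : V) = ⊥ := (hbot 0).mpr rfl
            simp [ha, this]
          · simpa [Set.mem_setOf_eq, hsmul a x ha] using hx } with hWdef
    have hW : ∀ x, x ∈ W ↔ ℓ x ≤ c := fun x => Iff.rfl
    rw [← key_rank ℓ hsmul v hvli hvsp hvorth c W hW,
      ← key_rank ℓ hsmul w hwli hwsp hworth c W hW]
  intro i
  exact le_antisymm
    (not_lt.mp (count_eq _ _ hwmono hvmono (fun c => (hcount c).symm) i))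
    (not_lt.mp (count_eq _ _ hvmono hwmono hcount i))
end

section
/- Let (V_1, ℓ_1), (V_2, ℓ_2), (W, ℓ_W) be orthogonalizable non-Archimedean normed spaces over a field k, and set C = V_1 ⊕ W with ℓ_C = ℓ_1 ⊕ ℓ_W and D = V_2 ⊕ W with ℓ_D = ℓ_2 ⊕ ℓ_W, where (ℓ ⊕ ℓ')(a,b) = max(ℓ(a), ℓ'(b)). Suppose ∂_C: C → C and ∂_D: D → D are norm-nonincreasing differentials (∂² = 0), and suppose there exist constants η > 0 and E > 0 such that (1) ℓ_j(v) ≤ E < ℓ_W(w) for all nonzero v ∈ V_j (j = 1,2) and nonzero w ∈ W, and (2) ℓ_W(π_W(∂_C w) − π_W(∂_D w)) < ℓ_W(w) − η for all w ∈ W, where π_W is the projection to W. For each complex, let its 'verbose barcode' be given by a singular-value-decomposition basis {x_i, y_j, z_j} with ∂ x_i = 0 and ∂ z_j = y_j, and let C^{<η}_E (resp. D^{<η}_E) be the multiset of intervals (ℓ(y_j), ℓ(z_j)] with ℓ(z_j) − ℓ(y_j) < η and ℓ(y_j) > E. Then C^{<η}_E = D^{<η}_E as multisets. -/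
open Classical

/-- Axioms of a non-Archimedean norm (over a field with trivial valuation). -/
def IsNAName {k V : Type*} [Field k] [AddCommGroup V] [Module k V] (ℓ : V → EReal) : Prop :=
  (∀ x : V, ℓ x = ⊥ ↔ x = 0) ∧
  (∀ (a : k) (x : V), a ≠ 0 → ℓ (a • x) = ℓ x) ∧
  (∀ x y : V, ℓ (x + y) ≤ max (ℓ x) (ℓ y))

/-- Orthogonality of a finite family with respect to a non-Archimedean norm. -/
def IsOrthFamily {k V : Type*} [Field k] [AddCommGroup V] [Module k V] (ℓ : V → EReal)
    {ι : Type*} [Fintype ι] (v : ι → V) : Prop :=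
  ∀ a : ι → k,
    ℓ (∑ i, a i • v i) = (Finset.univ.filter fun i => a i ≠ 0).sup fun i => ℓ (a i • v i)

section Aux

variable {k V W : Type*} [Field k] [AddCommGroup V] [Module k V] [AddCommGroup W] [Module k W]

lemma naname_zero {ℓ : V → EReal} (h : IsNAName (k := k) ℓ) : ℓ 0 = ⊥ := (h.1 0).2 rfl

lemma naname_prod {ℓV : V → EReal} {ℓW : W → EReal} (hV : IsNAName (k := k) ℓV)
    (hW : IsNAName (k := k) ℓW) :
    IsNAName (k := k) (fun p : V × W => max (ℓV p.1) (ℓW p.2)) := by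
  refine ⟨?_, ?_, ?_⟩
  · intro p
    rw [max_eq_bot, hV.1, hW.1, Prod.ext_iff]
    rfl
  · intro a p ha
    simp only [Prod.smul_fst, Prod.smul_snd]
    rw [hV.2.1 a _ ha, hW.2.1 a _ ha]
  · intro p q
    refine max_le ?_ ?_
    · exact le_trans (hV.2.2 p.1 q.1)
        (max_le_max (le_max_left _ _) (le_max_left _ _))
    · exact le_trans (hW.2.2 p.2 q.2)
        (max_le_max (le_max_right _ _) (le_max_right _ _))

/-- The sublevel submodule of a non-Archimedean norm. -/
def naSub (ℓ : W → EReal) (h : IsNAName (k := k) ℓ) (t : EReal) : Submodule k W where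
  carrier := {w | ℓ w ≤ t}
  add_mem' := fun {a b} ha hb => le_trans (h.2.2 a b) (max_le ha hb)
  zero_mem' := by
    show ℓ 0 ≤ t
    rw [naname_zero h]; exact bot_le
  smul_mem' := fun c x hx => by
    rcases eq_or_ne c 0 with rfl | hc
    · show ℓ ((0:k) • x) ≤ t
      rw [zero_smul, naname_zero h]; exact bot_le
    · show ℓ (c • x) ≤ t
      rw [h.2.1 c x hc]; exact hx

lemma mem_naSub {ℓ : W → EReal} {h : IsNAName (k := k) ℓ} {t : EReal} {w : W} :
    w ∈ naSub (k := k) ℓ h t ↔ ℓ w ≤ t := Iff.rfl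

lemma naSub_mono {ℓ : W → EReal} (h : IsNAName (k := k) ℓ) {t t' : EReal} (htt : t ≤ t') :
    naSub (k := k) ℓ h t ≤ naSub (k := k) ℓ h t' := fun _ hw => le_trans hw htt

/-- A subfamily of an orthogonal family is orthogonal. -/
lemma orth_comp {ι κ : Type*} [Fintype ι] [Fintype κ] {ℓ : V → EReal}
    {v : ι → V} (h : IsOrthFamily (k := k) ℓ v) {e : κ → ι} (he : Function.Injective e) :
    IsOrthFamily (k := k) ℓ (v ∘ e) := by
  intro a
  have key : ∑ j, a j • (v ∘ e) j = ∑ i, (Function.extend e a 0) i • v i := by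
    rw [← Finset.sum_subset (Finset.subset_univ (Finset.univ.image e))
      (fun i _ hi => ?_)]
    · rw [Finset.sum_image (fun x _ y _ hxy => he hxy)]
      refine Finset.sum_congr rfl fun j _ => ?_
      rw [he.extend_apply]; rfl
    · have : ¬ ∃ j, e j = i := by
        rintro ⟨j, rfl⟩
        exact hi (Finset.mem_image_of_mem e (Finset.mem_univ j))
      rw [Function.extend_apply' _ _ _ this, Pi.zero_apply, zero_smul]
  rw [key, h (Function.extend e a 0)]
  have hfil : (Finset.univ.filter fun i => Function.extend e a 0 i ≠ 0)
      = (Finset.univ.filter (fun j => a j ≠ 0)).image e := by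
    ext i
    simp only [Finset.mem_filter, Finset.mem_univ, true_and, Finset.mem_image]
    constructor
    · intro hi
      have hex : ∃ j, e j = i := by
        by_contra hno
        exact hi (by rw [Function.extend_apply' _ _ _ hno, Pi.zero_apply])
      obtain ⟨j, rfl⟩ := hex
      exact ⟨j, by rwa [he.extend_apply] at hi, rfl⟩
    · rintro ⟨j, hj, rfl⟩
      rwa [he.extend_apply]
  rw [hfil, Finset.sup_image]
  refine Finset.sup_congr rfl fun j hj => ?_
  simp only [Function.comp_apply, he.extend_apply]

end Aux

section CntEq

variable {k V W : Type*} [Field k] [AddCommGroup V] [Module k V] [AddCommGroup W] [Module k W]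

/-- The `W`-block of the differential. -/
def Aof (Dc : V × W →ₗ[k] V × W) : W →ₗ[k] W :=
  (LinearMap.snd k V W) ∘ₗ Dc ∘ₗ (LinearMap.inr k V W)

lemma Aof_apply (Dc : V × W →ₗ[k] V × W) (w : W) : Aof Dc w = (Dc (0, w)).2 := rfl

lemma cnt_eq [FiniteDimensional k W]
    {ℓV : V → EReal} {ℓW : W → EReal} (hV : IsNAName (k := k) ℓV)
    (hW : IsNAName (k := k) ℓW)
    {ℓC : V × W → EReal} (hℓC : ∀ p : V × W, ℓC p = max (ℓV p.1) (ℓW p.2))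
    {Dc : V × W →ₗ[k] V × W} (hD2 : ∀ c, Dc (Dc c) = 0) (hDl : ∀ c, ℓC (Dc c) ≤ ℓC c)
    (E : ℝ)
    (h1 : ∀ v : V, v ≠ 0 → ℓV v ≤ (E : EReal))
    (h1W : ∀ w : W, w ≠ 0 → (E : EReal) < ℓW w)
    {N M : ℕ} {x : Fin N → V × W} {y z : Fin M → V × W}
    (hsp : Submodule.span k (Set.range (Sum.elim x (Sum.elim y z))) = ⊤)
    (horth : IsOrthFamily (k := k) ℓC (Sum.elim x (Sum.elim y z)))
    (hx : ∀ i, Dc (x i) = 0) (hz : ∀ j, Dc (z j) = y j)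
    (s t : EReal) :
    Module.finrank k
      ↥(Submodule.map (Aof Dc) (naSub (k := k) ℓW hW t) ⊓ naSub (k := k) ℓW hW s)
    = (Finset.univ.filter fun j =>
        (E : EReal) < ℓC (y j) ∧ ℓC (y j) ≤ s ∧ ℓC (z j) ≤ t).card := by
  set v : (Fin N ⊕ (Fin M ⊕ Fin M)) → V × W := Sum.elim x (Sum.elim y z) with hv
  have hCna : IsNAName (k := k) ℓC := by
    have h : ℓC = fun p : V × W => max (ℓV p.1) (ℓW p.2) := funext hℓC
    rw [h]; exact naname_prod hV hW
  have hsnd : ∀ p : V × W, ℓW p.2 ≤ ℓC p := fun p => by rw [hℓC]; exact le_max_right _ _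
  have hfst : ∀ p : V × W, ℓV p.1 ≤ (E : EReal) := by
    intro p
    rcases eq_or_ne p.1 0 with h | h
    · rw [h, naname_zero hV]; exact bot_le
    · exact h1 _ h
  have hstrict : ∀ p : V × W, (E : EReal) < ℓC p → ℓC p = ℓW p.2 := by
    intro p hp
    rcases le_total (ℓV p.1) (ℓW p.2) with h' | h'
    · rw [hℓC, max_eq_right h']
    · exfalso
      rw [hℓC, max_eq_left h'] at hp
      exact absurd (hfst p) (not_le.2 hp)
  have hWzero : ∀ w : W, ℓW w ≤ (E : EReal) → w = 0 := by
    intro w hw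
    by_contra hne
    exact absurd hw (not_le.2 (h1W w hne))
  have hℓ0w : ∀ w : W, ℓC (0, w) = ℓW w := by
    intro w
    rw [hℓC]
    show max (ℓV 0) (ℓW w) = ℓW w
    rw [naname_zero hV]
    exact max_eq_right bot_le
  have hDv0 : ∀ vv : V, (Dc (vv, 0)).2 = 0 := by
    intro vv
    apply hWzero
    refine le_trans (hsnd _) (le_trans (hDl _) ?_)
    rw [hℓC]
    show max (ℓV vv) (ℓW 0) ≤ (E : EReal)
    rw [naname_zero hW]
    rw [max_eq_left bot_le]
    exact hfst (vv, 0)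
  have hDy : ∀ j, Dc (y j) = 0 := fun j => by rw [← hz j]; exact hD2 _
  have hAz : ∀ j, Aof Dc ((z j).2) = (y j).2 := by
    intro j
    have hdec : z j = ((z j).1, 0) + (0, (z j).2) := by ext <;> simp
    have hsum : y j = Dc ((z j).1, 0) + Dc (0, (z j).2) := by
      rw [← map_add, ← hdec, hz]
    have h2' : (y j).2 = (Dc ((z j).1, 0)).2 + (Dc (0, (z j).2)).2 := by
      rw [hsum]; rfl
    rw [Aof_apply, h2', hDv0, zero_add]
  have horthsum : ∀ a : (Fin N ⊕ (Fin M ⊕ Fin M)) → k,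
      ℓC (∑ i, a i • v i)
        = (Finset.univ.filter fun i => a i ≠ 0).sup fun i => ℓC (v i) := by
    intro a
    rw [horth a]
    refine Finset.sup_congr rfl fun i hi => ?_
    rw [hCna.2.1 _ _ (Finset.mem_filter.1 hi).2]
  have hmem : ∀ c : V × W, ∃ a : (Fin N ⊕ (Fin M ⊕ Fin M)) → k, ∑ i, a i • v i = c := by
    intro c
    have : c ∈ Submodule.span k (Set.range v) := by rw [hv, hsp]; exact Submodule.mem_top
    exact (Submodule.mem_span_range_iff_exists_fun k).1 this
  set J : Finset (Fin M) := Finset.univ.filter fun j =>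
    (E : EReal) < ℓC (y j) ∧ ℓC (y j) ≤ s ∧ ℓC (z j) ≤ t with hJ
  set f : Fin M → W := fun j => (y j).2 with hf
  have horthy : IsOrthFamily (k := k) ℓC y := by
    have := orth_comp (k := k) horth
      (e := fun j : Fin M => (Sum.inr (Sum.inl j) : Fin N ⊕ (Fin M ⊕ Fin M)))
      (fun a b hab => by simpa using hab)
    exact this
  have span_eq : Submodule.map (Aof Dc) (naSub (k := k) ℓW hW t) ⊓ naSub (k := k) ℓW hW s
      = Submodule.span k (f '' ↑J) := by
    apply le_antisymm
    · rintro u hu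
      obtain ⟨humap, hus⟩ := Submodule.mem_inf.1 hu
      obtain ⟨w, hwt, hAwu⟩ := Submodule.mem_map.1 humap
      have hwt : ℓW w ≤ t := hwt
      have hus : ℓW u ≤ s := hus
      obtain ⟨a, ha⟩ := hmem (0, w)
      set a' : Fin M → k := fun j => a (Sum.inr (Sum.inr j)) with ha'
      have hDsum : Dc (0, w) = ∑ j : Fin M, a' j • y j := by
        calc Dc (0, w) = Dc (∑ i, a i • v i) := by rw [ha]
          _ = ∑ i, a i • Dc (v i) := by rw [map_sum]; simp_rw [map_smul]
          _ = ∑ j : Fin M, a' j • y j := by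
              rw [Fintype.sum_sum_type, Fintype.sum_sum_type]
              simp [hv, hx, hDy, hz, ha']
      have hu' : u = ∑ j, a' j • f j := by
        rw [← hAwu, Aof_apply, hDsum, Prod.snd_sum]
        refine Finset.sum_congr rfl fun j _ => ?_
        simp [hf]
      have hzt' : ∀ j, a' j ≠ 0 → ℓC (z j) ≤ t := by
        intro j hj
        have h0w : ℓC (0, w) ≤ t := by rw [hℓ0w]; exact hwt
        have hsup := horthsum a
        rw [ha] at hsup
        have hmemf : (Sum.inr (Sum.inr j) : Fin N ⊕ (Fin M ⊕ Fin M))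
            ∈ Finset.univ.filter (fun i => a i ≠ 0) :=
          Finset.mem_filter.2 ⟨Finset.mem_univ _, hj⟩
        have hle : ℓC (v (Sum.inr (Sum.inr j))) ≤ ℓC (0, w) := by
          rw [hsup]
          exact Finset.le_sup (f := fun i => ℓC (v i)) hmemf
        have : ℓC (z j) ≤ ℓC (0, w) := by simpa [hv] using hle
        exact le_trans this h0w
      have hfE : ∀ j, ℓC (y j) ≤ (E : EReal) → f j = 0 := fun j hj =>
        hWzero _ (le_trans (hsnd _) hj)
      set S₀ : Finset (Fin M) := Finset.univ.filter fun j => (E : EReal) < ℓC (y j) with hS₀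
      have hu'' : u = ∑ j ∈ S₀, a' j • f j := by
        rw [hu']
        symm
        apply Finset.sum_subset (Finset.filter_subset _ _)
        intro j _ hj
        have hjE : ℓC (y j) ≤ (E : EReal) := by
          by_contra hcon
          exact hj (Finset.mem_filter.2 ⟨Finset.mem_univ _, not_le.1 hcon⟩)
        rw [hfE j hjE, smul_zero]
      set a'' : Fin M → k := fun j => if (E : EReal) < ℓC (y j) then a' j else 0 with ha''
      set c₁ : V × W := ∑ j, a'' j • y j with hc₁
      have hc₁2 : c₁.2 = u := by
        rw [hc₁, Prod.snd_sum, hu']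
        refine Finset.sum_congr rfl fun j _ => ?_
        by_cases hEj : (E : EReal) < ℓC (y j)
        · simp [ha'', hEj, hf]
        · have h0 : f j = 0 := hfE j (not_lt.1 hEj)
          simp [ha'', hEj, hf] at h0 ⊢
          simp [h0]
      have hys : ∀ j ∈ S₀, a' j ≠ 0 → ℓC (y j) ≤ s := by
        intro j hjS hj
        have hjE : (E : EReal) < ℓC (y j) := (Finset.mem_filter.1 hjS).2
        have hsupy := horthy a''
        have hsupy' : ℓC c₁ = (Finset.univ.filter fun j => a'' j ≠ 0).sup
            fun j => ℓC (y j) := by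
          rw [hc₁, hsupy]
          refine Finset.sup_congr rfl fun i hi => ?_
          rw [hCna.2.1 _ _ (Finset.mem_filter.1 hi).2]
        have hjmem : j ∈ Finset.univ.filter fun j => a'' j ≠ 0 := by
          refine Finset.mem_filter.2 ⟨Finset.mem_univ _, ?_⟩
          rw [ha'']
          simpa [hjE] using hj
        have hle : ℓC (y j) ≤ ℓC c₁ := by
          rw [hsupy']
          exact Finset.le_sup (f := fun j => ℓC (y j)) hjmem
        have hEc₁ : (E : EReal) < ℓC c₁ := lt_of_lt_of_le hjE hle
        have : ℓC c₁ = ℓW u := by rw [hstrict _ hEc₁, hc₁2]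
        exact le_trans hle (this ▸ hus)
      rw [hu'']
      apply Submodule.sum_mem
      intro j hjS₀
      by_cases hj : a' j = 0
      · rw [hj, zero_smul]; exact Submodule.zero_mem _
      · refine Submodule.smul_mem _ _ (Submodule.subset_span ?_)
        refine ⟨j, ?_, rfl⟩
        refine Finset.mem_coe.2 (Finset.mem_filter.2 ⟨Finset.mem_univ _,
          (Finset.mem_filter.1 hjS₀).2, hys j hjS₀ hj, hzt' j hj⟩)
    · rw [Submodule.span_le]
      rintro u ⟨j, hjJ, rfl⟩
      have hjJ' := Finset.mem_filter.1 (Finset.mem_coe.1 hjJ)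
      refine Submodule.mem_inf.2 ⟨?_, ?_⟩
      · exact Submodule.mem_map.2 ⟨(z j).2, le_trans (hsnd _) hjJ'.2.2.2, hAz j⟩
      · exact le_trans (hsnd _) hjJ'.2.2.1
  rw [span_eq]
  have himg : f '' ↑J = Set.range fun j : ↥J => f ↑j := Set.image_eq_range f ↑J
  have li : LinearIndependent k fun j : ↥J => f ↑j := by
    rw [Fintype.linearIndependent_iff]
    intro g hg
    by_contra hcon
    push_neg at hcon
    obtain ⟨j₀, hj₀⟩ := hcon
    have horthJ : IsOrthFamily (k := k) ℓC fun jj : ↥J => y ↑jj := by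
      have := orth_comp (k := k) horth
        (e := fun jj : ↥J => (Sum.inr (Sum.inl (jj : Fin M)) : Fin N ⊕ (Fin M ⊕ Fin M)))
        (fun a b hab => by
          apply Subtype.ext
          simpa using hab)
      exact this
    set c₂ : V × W := ∑ jj : ↥J, g jj • y ↑jj with hc₂
    have hsupc₂ : ℓC c₂ = (Finset.univ.filter fun jj : ↥J => g jj ≠ 0).sup
        fun jj => ℓC (y ↑jj) := by
      rw [hc₂, horthJ g]
      refine Finset.sup_congr rfl fun i hi => ?_
      rw [hCna.2.1 _ _ (Finset.mem_filter.1 hi).2]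
    have hle : ℓC (y ↑j₀) ≤ ℓC c₂ := by
      rw [hsupc₂]
      exact Finset.le_sup (f := fun jj : ↥J => ℓC (y ↑jj))
        (Finset.mem_filter.2 ⟨Finset.mem_univ _, hj₀⟩)
    have hEj₀ : (E : EReal) < ℓC (y ↑j₀) :=
      ((Finset.mem_filter.1 j₀.2).2).1
    have hEc₂ : (E : EReal) < ℓC c₂ := lt_of_lt_of_le hEj₀ hle
    have hc₂2 : c₂.2 = 0 := by
      rw [hc₂, Prod.snd_sum, ← hg]
      refine Finset.sum_congr rfl fun jj _ => ?_
      simp [hf]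
    have : ℓC c₂ = ⊥ := by
      rw [hstrict _ hEc₂, hc₂2, naname_zero hW]
    rw [this] at hEc₂
    exact (not_lt_bot hEc₂)
  rw [himg, finrank_span_eq_card li, Fintype.card_coe]

end CntEq

section FourRank

variable {k W : Type*} [Field k] [AddCommGroup W] [Module k W] [FiniteDimensional k W]

open Submodule Module

lemma rank_split (A : W →ₗ[k] W) (U S : Submodule k W) :
    finrank k ↥(U ⊓ S.comap A)
      = finrank k ↥(Submodule.map A U ⊓ S) + finrank k ↥(U ⊓ LinearMap.ker A) := by
  set P : Submodule k W := U ⊓ S.comap A with hP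
  have hrange : LinearMap.range (A.domRestrict P) = Submodule.map A U ⊓ S := by
    apply le_antisymm
    · rintro u ⟨⟨w, hw⟩, rfl⟩
      exact mem_inf.2 ⟨mem_map_of_mem hw.1, hw.2⟩
    · rintro u ⟨humap, hus⟩
      obtain ⟨w, hw, rfl⟩ := mem_map.1 humap
      exact ⟨⟨w, mem_inf.2 ⟨hw, hus⟩⟩, rfl⟩
  have hker : LinearMap.ker (A.domRestrict P) = (U ⊓ LinearMap.ker A).comap P.subtype := by
    ext w
    simp only [LinearMap.mem_ker, LinearMap.domRestrict_apply, mem_comap, mem_inf,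
      Submodule.coe_subtype]
    constructor
    · intro h; exact ⟨w.2.1, h⟩
    · intro h; exact h.2
  have hle : U ⊓ LinearMap.ker A ≤ P := by
    refine le_inf inf_le_left ?_
    intro w hw
    have : A w = 0 := (mem_inf.1 hw).2
    show A w ∈ S
    rw [this]; exact zero_mem S
  have hkerrank : finrank k ↥(LinearMap.ker (A.domRestrict P))
      = finrank k ↥(U ⊓ LinearMap.ker A) := by
    rw [hker]
    exact LinearEquiv.finrank_eq (Submodule.comapSubtypeEquivOfLe hle)
  have h := LinearMap.finrank_range_add_finrank_ker (A.domRestrict P)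
  rw [hrange, hkerrank] at h
  exact h.symm

lemma four_rank (A B : W →ₗ[k] W) (U S S' : Submodule k W) (hS : S' ≤ S)
    (hAB : ∀ w ∈ U, A w - B w ∈ S') :
    finrank k ↥(Submodule.map A U ⊓ S) + finrank k ↥(Submodule.map B U ⊓ S')
      = finrank k ↥(Submodule.map B U ⊓ S) + finrank k ↥(Submodule.map A U ⊓ S') := by
  have hcomap : ∀ T : Submodule k W, S' ≤ T → U ⊓ T.comap A = U ⊓ T.comap B := by
    intro T hT
    ext w
    simp only [mem_inf, mem_comap]
    constructor
    · rintro ⟨hwU, hwA⟩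
      refine ⟨hwU, ?_⟩
      have : B w = A w - (A w - B w) := by abel
      rw [this]
      exact sub_mem hwA (hT (hAB w hwU))
    · rintro ⟨hwU, hwB⟩
      refine ⟨hwU, ?_⟩
      have : A w = B w + (A w - B w) := by abel
      rw [this]
      exact add_mem hwB (hT (hAB w hwU))
  have e1 := rank_split A U S
  have e2 := rank_split A U S'
  have e3 := rank_split B U S
  have e4 := rank_split B U S'
  rw [hcomap S hS] at e1
  rw [hcomap S' le_rfl] at e2
  omega

end FourRank

section Count

open Finset

lemma count_id_fin {M : ℕ} (Y Z : Fin M → EReal) (E a b a' b' : EReal)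
    (hEa : E < a) (ha' : a' < a) (hb' : b' < b)
    (hgapY : ∀ j, Y j < a → Y j ≤ a') (hgapZ : ∀ j, Z j < b → Z j ≤ b') :
    (univ.filter fun j => Y j = a ∧ Z j = b).card
      + (univ.filter fun j => E < Y j ∧ Y j ≤ a' ∧ Z j ≤ b).card
      + (univ.filter fun j => E < Y j ∧ Y j ≤ a ∧ Z j ≤ b').card
    = (univ.filter fun j => E < Y j ∧ Y j ≤ a ∧ Z j ≤ b).card
      + (univ.filter fun j => E < Y j ∧ Y j ≤ a' ∧ Z j ≤ b').card := by
  have haa' : ¬ (a ≤ a') := not_le.2 ha'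
  have hbb' : ¬ (b ≤ b') := not_le.2 hb'
  simp only [Finset.card_filter]
  rw [← Finset.sum_add_distrib, ← Finset.sum_add_distrib, ← Finset.sum_add_distrib]
  refine Finset.sum_congr rfl fun j _ => ?_
  by_cases h1 : E < Y j
  · by_cases h2 : Y j ≤ a'
    · have hne : Y j ≠ a := fun h => absurd ha' (not_lt.2 (h ▸ h2))
      have h3 : Y j ≤ a := h2.trans ha'.le
      by_cases h4 : Z j ≤ b'
      · have h5 : Z j ≤ b := h4.trans hb'.le
        simp [hne, h1, h2, h3, h4, h5]
      · by_cases h6 : Z j ≤ b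
        · simp [hne, h1, h2, h3, h4, h6]
        · simp [hne, h1, h2, h3, h4, h6]
    · by_cases h3 : Y j ≤ a
      · have hya : Y j = a := by
          rcases h3.lt_or_eq with h | h
          · exact absurd (hgapY j h) h2
          · exact h
        by_cases h4 : Z j ≤ b'
        · have hzb : Z j ≠ b := fun h => absurd hb' (not_lt.2 (h ▸ h4))
          have h5 : Z j ≤ b := h4.trans hb'.le
          simp [hya, hzb, h1, h2, h3, h4, h5, hEa, haa', hbb']
        · by_cases h5 : Z j ≤ b
          · have hzb : Z j = b := by
              rcases h5.lt_or_eq with h | h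
              · exact absurd (hgapZ j h) h4
              · exact h
            simp [hya, hzb, h1, h2, h3, h4, h5, hEa, haa', hbb']
          · have hzb : Z j ≠ b := fun h => absurd (h ▸ le_rfl) h5
            simp [hya, hzb, h1, h2, h3, h4, h5]
      · have hne : Y j ≠ a := fun h => absurd (h ▸ le_rfl) h3
        simp [hne, h1, h2, h3]
  · have hne : Y j ≠ a := fun h => absurd (h ▸ hEa) h1
    simp [hne, h1]

lemma count_id_top {M : ℕ} (Y Z : Fin M → EReal) (E R : EReal) (hR : ¬ ((⊤ : EReal) ≤ R))
    (hE : E < ⊤) (hYZ : ∀ j, Y j ≤ Z j) (hbd : ∀ j, Y j ≠ ⊤ → Y j ≤ R) :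
    (univ.filter fun j => E < Y j ∧ Y j ≤ (⊤ : EReal) ∧ Z j ≤ (⊤ : EReal)).card
      = (univ.filter fun j => Y j = (⊤ : EReal) ∧ Z j = (⊤ : EReal)).card
        + (univ.filter fun j => E < Y j ∧ Y j ≤ R ∧ Z j ≤ (⊤ : EReal)).card := by
  have hRT : R ≠ ⊤ := fun h => hR (h ▸ le_rfl)
  simp only [Finset.card_filter]
  rw [← Finset.sum_add_distrib]
  refine Finset.sum_congr rfl fun j _ => ?_
  by_cases hY : Y j = ⊤
  · have hZ : Z j = ⊤ := top_le_iff.1 (hY ▸ hYZ j)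
    have hEY : E < Y j := hY ▸ hE
    have hYR : ¬ (Y j ≤ R) := hY ▸ hR
    simp [hY, hZ, hEY, hYR, hE, hRT]
  · have hYR : Y j ≤ R := hbd j hY
    simp [hY, hYR, le_top]

end Count

section ValBound

variable {k C : Type*} [Field k] [AddCommGroup C] [Module k C]

lemma val_bound {ι : Type*} [Fintype ι] {ℓ : C → EReal} (hna : IsNAName (k := k) ℓ)
    {v : ι → C} (hsp : Submodule.span k (Set.range v) = ⊤)
    (horth : IsOrthFamily (k := k) ℓ v) (c : C) (hc : ℓ c ≠ ⊤) :
    ℓ c ≤ Finset.univ.sup fun i => if ℓ (v i) = ⊤ then ⊥ else ℓ (v i) := by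
  obtain ⟨a, ha⟩ : ∃ a : ι → k, ∑ i, a i • v i = c :=
    (Submodule.mem_span_range_iff_exists_fun k).1 (by rw [hsp]; exact Submodule.mem_top)
  have hform : ℓ c = (Finset.univ.filter fun i => a i ≠ 0).sup fun i => ℓ (v i) := by
    rw [← ha, horth a]
    refine Finset.sup_congr rfl fun i hi => ?_
    rw [hna.2.1 _ _ (Finset.mem_filter.1 hi).2]
  rw [hform]
  apply Finset.sup_le
  intro i hi
  have hle : ℓ (v i) ≤ ℓ c := by
    rw [hform]
    exact Finset.le_sup (f := fun i => ℓ (v i)) hi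
  have hne : ℓ (v i) ≠ ⊤ := fun h => hc (top_le_iff.1 (h ▸ hle))
  calc ℓ (v i) = if ℓ (v i) = ⊤ then ⊥ else ℓ (v i) := by rw [if_neg hne]
    _ ≤ _ := Finset.le_sup (f := fun i => if ℓ (v i) = ⊤ then ⊥ else ℓ (v i))
        (Finset.mem_univ i)

lemma val_sup_lt_top {ι : Type*} [Fintype ι] (ℓ : C → EReal) (v : ι → C) :
    (Finset.univ.sup fun i => if ℓ (v i) = ⊤ then ⊥ else ℓ (v i)) < ⊤ := by
  rw [Finset.sup_lt_iff (by simp : (⊥ : EReal) < ⊤)]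
  intro i _
  split_ifs with h
  · simp
  · exact lt_top_iff_ne_top.2 h

end ValBound

/-- Let `(V₁, ℓ₁)`, `(V₂, ℓ₂)`, `(W, ℓ_W)` be orthogonalizable
non-Archimedean normed spaces, `C = V₁ ⊕ W` and `D = V₂ ⊕ W` with the max-norms, equipped
with norm-nonincreasing differentials `∂_C`, `∂_D`.  Assume there are `η > 0` and `E > 0`
with (1) `ℓⱼ(v) ≤ E < ℓ_W(w)` for nonzero `v ∈ Vⱼ`, `w ∈ W`, and (2)
`ℓ_W(π_W(∂_C w) − π_W(∂_D w)) < ℓ_W(w) − η` for all (nonzero) `w ∈ W`.  Then the multisets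
of finite bars `(ℓ(y_j), ℓ(z_j)]` of length `< η` with left endpoint `> E`, read off from
singular value decomposition bases of `C` and `D`, coincide. -/
theorem stmt_8 {k V₁ V₂ W : Type*} [Field k]
    [AddCommGroup V₁] [Module k V₁] [AddCommGroup V₂] [Module k V₂]
    [AddCommGroup W] [Module k W]
    (ℓ₁ : V₁ → EReal) (ℓ₂ : V₂ → EReal) (ℓW : W → EReal)
    (hℓ₁ : IsNAName (k := k) ℓ₁) (hℓ₂ : IsNAName (k := k) ℓ₂) (hℓW : IsNAName (k := k) ℓW)
    -- the max-norms on C = V₁ ⊕ W and D = V₂ ⊕ W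
    (ℓC : V₁ × W → EReal) (hℓC : ∀ p : V₁ × W, ℓC p = max (ℓ₁ p.1) (ℓW p.2))
    (ℓD : V₂ × W → EReal) (hℓD : ∀ p : V₂ × W, ℓD p = max (ℓ₂ p.1) (ℓW p.2))
    -- norm-nonincreasing differentials
    (DC : V₁ × W →ₗ[k] V₁ × W) (DD : V₂ × W →ₗ[k] V₂ × W)
    (hDC2 : ∀ c, DC (DC c) = 0) (hDD2 : ∀ d, DD (DD d) = 0)
    (hDCℓ : ∀ c, ℓC (DC c) ≤ ℓC c) (hDDℓ : ∀ d, ℓD (DD d) ≤ ℓD d)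
    -- the constants η and E
    (η E : ℝ) (hη : 0 < η) (hE : 0 < E)
    (h1₁ : ∀ v : V₁, v ≠ 0 → ℓ₁ v ≤ (E : EReal))
    (h1₂ : ∀ v : V₂, v ≠ 0 → ℓ₂ v ≤ (E : EReal))
    (h1W : ∀ w : W, w ≠ 0 → (E : EReal) < ℓW w)
    (h2 : ∀ w : W, w ≠ 0 →
      ℓW ((DC (0, w)).2 - (DD (0, w)).2) < ℓW w - (η : EReal))
    -- a singular value decomposition basis of C
    {NC MC : ℕ} (xC : Fin NC → V₁ × W) (yC zC : Fin MC → V₁ × W)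
    (hCli : LinearIndependent k (Sum.elim xC (Sum.elim yC zC)))
    (hCsp : Submodule.span k (Set.range (Sum.elim xC (Sum.elim yC zC))) = ⊤)
    (hCorth : IsOrthFamily (k := k) ℓC (Sum.elim xC (Sum.elim yC zC)))
    (hCx : ∀ i, DC (xC i) = 0) (hCz : ∀ j, DC (zC j) = yC j)
    -- a singular value decomposition basis of D
    {ND MD : ℕ} (xD : Fin ND → V₂ × W) (yD zD : Fin MD → V₂ × W)
    (hDli : LinearIndependent k (Sum.elim xD (Sum.elim yD zD)))
    (hDsp : Submodule.span k (Set.range (Sum.elim xD (Sum.elim yD zD))) = ⊤)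
    (hDorth : IsOrthFamily (k := k) ℓD (Sum.elim xD (Sum.elim yD zD)))
    (hDx : ∀ i, DD (xD i) = 0) (hDz : ∀ j, DD (zD j) = yD j) :
    ((Finset.univ.filter fun j : Fin MC =>
        ℓC (zC j) - ℓC (yC j) < (η : EReal) ∧ (E : EReal) < ℓC (yC j)).val.map
          fun j => (ℓC (yC j), ℓC (zC j))) =
      ((Finset.univ.filter fun j : Fin MD =>
        ℓD (zD j) - ℓD (yD j) < (η : EReal) ∧ (E : EReal) < ℓD (yD j)).val.map
          fun j => (ℓD (yD j), ℓD (zD j))) := by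
    -- finite dimensionality of W
  have hCfin : Module.Finite k (V₁ × W) :=
    ⟨⟨(Set.finite_range (Sum.elim xC (Sum.elim yC zC))).toFinset, by
      rwa [Set.Finite.coe_toFinset]⟩⟩
  have hWfin : FiniteDimensional k W :=
    Module.Finite.of_surjective (LinearMap.snd k V₁ W) (fun w => ⟨(0, w), rfl⟩)
  -- names
  have hCna : IsNAName (k := k) ℓC := by
    have h : ℓC = fun p : V₁ × W => max (ℓ₁ p.1) (ℓW p.2) := funext hℓC
    rw [h]; exact naname_prod hℓ₁ hℓW
  have hDna : IsNAName (k := k) ℓD := by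
    have h : ℓD = fun p : V₂ × W => max (ℓ₂ p.1) (ℓW p.2) := funext hℓD
    rw [h]; exact naname_prod hℓ₂ hℓW
  have hℓ0wC : ∀ w : W, ℓC (0, w) = ℓW w := by
    intro w
    rw [hℓC]
    show max (ℓ₁ 0) (ℓW w) = ℓW w
    rw [naname_zero hℓ₁]
    exact max_eq_right bot_le
  -- elementary order facts
  have hYZC : ∀ j, ℓC (yC j) ≤ ℓC (zC j) := fun j => by rw [← hCz j]; exact hDCℓ _
  have hYZD : ∀ j, ℓD (yD j) ≤ ℓD (zD j) := fun j => by rw [← hDz j]; exact hDDℓ _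
  -- the counting functions
  have cntC : ∀ s t : EReal,
      Module.finrank k
        ↥(Submodule.map (Aof DC) (naSub (k := k) ℓW hℓW t) ⊓ naSub (k := k) ℓW hℓW s)
      = (Finset.univ.filter fun j =>
          (E : EReal) < ℓC (yC j) ∧ ℓC (yC j) ≤ s ∧ ℓC (zC j) ≤ t).card :=
    fun s t => cnt_eq hℓ₁ hℓW hℓC hDC2 hDCℓ E h1₁ h1W hCsp hCorth hCx hCz s t
  have cntD : ∀ s t : EReal,
      Module.finrank k
        ↥(Submodule.map (Aof DD) (naSub (k := k) ℓW hℓW t) ⊓ naSub (k := k) ℓW hℓW s)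
      = (Finset.univ.filter fun j =>
          (E : EReal) < ℓD (yD j) ∧ ℓD (yD j) ≤ s ∧ ℓD (zD j) ≤ t).card :=
    fun s t => cnt_eq hℓ₂ hℓW hℓD hDD2 hDDℓ E h1₂ h1W hDsp hDorth hDx hDz s t
  -- the cross identity
  have cross : ∀ s s' t : EReal, s' ≤ s →
      (∀ w : W, ℓW w ≤ t → ℓW (Aof DC w - Aof DD w) ≤ s') →
      (Finset.univ.filter fun j =>
          (E : EReal) < ℓC (yC j) ∧ ℓC (yC j) ≤ s ∧ ℓC (zC j) ≤ t).card
        + (Finset.univ.filter fun j =>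
          (E : EReal) < ℓD (yD j) ∧ ℓD (yD j) ≤ s' ∧ ℓD (zD j) ≤ t).card
      = (Finset.univ.filter fun j =>
          (E : EReal) < ℓD (yD j) ∧ ℓD (yD j) ≤ s ∧ ℓD (zD j) ≤ t).card
        + (Finset.univ.filter fun j =>
          (E : EReal) < ℓC (yC j) ∧ ℓC (yC j) ≤ s' ∧ ℓC (zC j) ≤ t).card := by
    intro s s' t hss' hAB
    have h4 := four_rank (Aof DC) (Aof DD) (naSub (k := k) ℓW hℓW t)
      (naSub (k := k) ℓW hℓW s) (naSub (k := k) ℓW hℓW s')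
      (naSub_mono hℓW hss') (fun w hw => hAB w hw)
    rw [cntC s t, cntD s' t, cntD s t, cntC s' t] at h4
    exact h4
  -- difference bound
  have hdiff : ∀ w : W, w ≠ 0 → ℓW (Aof DC w - Aof DD w) < ℓW w - (η : EReal) := by
    intro w hw
    exact h2 w hw
  -- multiset extensionality
  rw [Multiset.ext]
  rintro ⟨a, b⟩
  rw [Multiset.count_map _ _ (b := (a, b)), Multiset.count_map _ _ (b := (a, b)),
    ← Finset.filter_val, ← Finset.filter_val, Finset.filter_filter, Finset.filter_filter,
    Finset.card_val, Finset.card_val]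
  -- normalize the predicates
  have keyC : (Finset.filter (fun j =>
        (ℓC (zC j) - ℓC (yC j) < (η : EReal) ∧ (E : EReal) < ℓC (yC j))
          ∧ (a, b) = (ℓC (yC j), ℓC (zC j))) Finset.univ)
      = Finset.filter (fun j => (ℓC (yC j) = a ∧ ℓC (zC j) = b)
          ∧ (b - a < (η : EReal) ∧ (E : EReal) < a)) Finset.univ := by
    apply Finset.filter_congr
    intro j _
    constructor
    · rintro ⟨⟨h1, h2⟩, h3⟩
      have ha : a = ℓC (yC j) := congrArg Prod.fst h3
      have hb : b = ℓC (zC j) := congrArg Prod.snd h3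
      exact ⟨⟨ha.symm, hb.symm⟩, by rw [ha, hb]; exact ⟨h1, h2⟩⟩
    · rintro ⟨⟨h1, h2⟩, h3, h4⟩
      refine ⟨⟨?_, ?_⟩, ?_⟩
      · rw [h1, h2]; exact h3
      · rw [h1]; exact h4
      · rw [h1, h2]
  have keyD : (Finset.filter (fun j =>
        (ℓD (zD j) - ℓD (yD j) < (η : EReal) ∧ (E : EReal) < ℓD (yD j))
          ∧ (a, b) = (ℓD (yD j), ℓD (zD j))) Finset.univ)
      = Finset.filter (fun j => (ℓD (yD j) = a ∧ ℓD (zD j) = b)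
          ∧ (b - a < (η : EReal) ∧ (E : EReal) < a)) Finset.univ := by
    apply Finset.filter_congr
    intro j _
    constructor
    · rintro ⟨⟨h1, h2⟩, h3⟩
      have ha : a = ℓD (yD j) := congrArg Prod.fst h3
      have hb : b = ℓD (zD j) := congrArg Prod.snd h3
      exact ⟨⟨ha.symm, hb.symm⟩, by rw [ha, hb]; exact ⟨h1, h2⟩⟩
    · rintro ⟨⟨h1, h2⟩, h3, h4⟩
      refine ⟨⟨?_, ?_⟩, ?_⟩
      · rw [h1, h2]; exact h3
      · rw [h1]; exact h4
      · rw [h1, h2]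
  rw [keyC, keyD]
  by_cases hcond : b - a < (η : EReal) ∧ (E : EReal) < a
  swap
  · have e1 := Finset.filter_false_of_mem (s := (Finset.univ : Finset (Fin MC)))
      (p := fun j => (ℓC (yC j) = a ∧ ℓC (zC j) = b)
        ∧ (b - a < (η : EReal) ∧ (E : EReal) < a)) (fun j _ h => hcond h.2)
    have e2 := Finset.filter_false_of_mem (s := (Finset.univ : Finset (Fin MD)))
      (p := fun j => (ℓD (yD j) = a ∧ ℓD (zD j) = b)
        ∧ (b - a < (η : EReal) ∧ (E : EReal) < a)) (fun j _ h => hcond h.2)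
    rw [e1, e2]
    simp
  obtain ⟨hba, hEa⟩ := hcond
  rw [Finset.filter_congr (q := fun j => ℓC (yC j) = a ∧ ℓC (zC j) = b)
      (fun j _ => by simp [hba, hEa]),
    Finset.filter_congr (q := fun j => ℓD (yD j) = a ∧ ℓD (zD j) = b)
      (fun j _ => by simp [hba, hEa])]
  have haB : a ≠ ⊥ := by rintro rfl; exact absurd hEa (by simp)
  by_cases haT : a = ⊤
  · subst haT
    by_cases hbT : b = ⊤
    · subst hbT
      -- the (⊤, ⊤) multiplicity
      have hRlt : max (Finset.univ.sup fun i =>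
            if ℓC (Sum.elim xC (Sum.elim yC zC) i) = ⊤ then ⊥
            else ℓC (Sum.elim xC (Sum.elim yC zC) i))
          (Finset.univ.sup fun i =>
            if ℓD (Sum.elim xD (Sum.elim yD zD) i) = ⊤ then ⊥
            else ℓD (Sum.elim xD (Sum.elim yD zD) i)) < ⊤ :=
        max_lt (val_sup_lt_top ℓC _) (val_sup_lt_top ℓD _)
      set R : EReal := max (Finset.univ.sup fun i =>
            if ℓC (Sum.elim xC (Sum.elim yC zC) i) = ⊤ then ⊥
            else ℓC (Sum.elim xC (Sum.elim yC zC) i))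
          (Finset.univ.sup fun i =>
            if ℓD (Sum.elim xD (Sum.elim yD zD) i) = ⊤ then ⊥
            else ℓD (Sum.elim xD (Sum.elim yD zD) i)) with hRdef
      have hRtop : ¬ ((⊤ : EReal) ≤ R) := not_le.2 hRlt
      have hbdC : ∀ j, ℓC (yC j) ≠ ⊤ → ℓC (yC j) ≤ R := fun j h =>
        le_trans (val_bound hCna hCsp hCorth (yC j) h) (le_max_left _ _)
      have hbdD : ∀ j, ℓD (yD j) ≠ ⊤ → ℓD (yD j) ≤ R := fun j h =>
        le_trans (val_bound hDna hDsp hDorth (yD j) h) (le_max_right _ _)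
      have mC : (Finset.filter (fun j => (E : EReal) < ℓC (yC j)
              ∧ ℓC (yC j) ≤ (⊤ : EReal) ∧ ℓC (zC j) ≤ (⊤ : EReal)) Finset.univ).card
          = (Finset.filter (fun j => ℓC (yC j) = (⊤ : EReal)
              ∧ ℓC (zC j) = (⊤ : EReal)) Finset.univ).card
            + (Finset.filter (fun j => (E : EReal) < ℓC (yC j)
              ∧ ℓC (yC j) ≤ R ∧ ℓC (zC j) ≤ (⊤ : EReal)) Finset.univ).card :=
        count_id_top (fun j => ℓC (yC j)) (fun j => ℓC (zC j)) (E : EReal) R hRtop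
          (EReal.coe_lt_top E) hYZC hbdC
      have mD : (Finset.filter (fun j => (E : EReal) < ℓD (yD j)
              ∧ ℓD (yD j) ≤ (⊤ : EReal) ∧ ℓD (zD j) ≤ (⊤ : EReal)) Finset.univ).card
          = (Finset.filter (fun j => ℓD (yD j) = (⊤ : EReal)
              ∧ ℓD (zD j) = (⊤ : EReal)) Finset.univ).card
            + (Finset.filter (fun j => (E : EReal) < ℓD (yD j)
              ∧ ℓD (yD j) ≤ R ∧ ℓD (zD j) ≤ (⊤ : EReal)) Finset.univ).card :=
        count_id_top (fun j => ℓD (yD j)) (fun j => ℓD (zD j)) (E : EReal) R hRtop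
          (EReal.coe_lt_top E) hYZD hbdD
      have hABtop : ∀ w : W, ℓW w ≤ (⊤ : EReal) → ℓW (Aof DC w - Aof DD w) ≤ R := by
        intro w _
        rcases eq_or_ne w 0 with rfl | hw
        · have h0 : Aof DC (0 : W) - Aof DD 0 = 0 := by simp
          rw [h0, naname_zero hℓW]; exact bot_le
        · have hlt := hdiff w hw
          have hne : ℓW (Aof DC w - Aof DD w) ≠ ⊤ :=
            ne_top_of_lt (lt_of_lt_of_le hlt le_top)
          have hvb := val_bound hCna hCsp hCorth (0, Aof DC w - Aof DD w)
            (by rw [hℓ0wC]; exact hne)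
          rw [hℓ0wC] at hvb
          exact le_trans hvb (le_max_left _ _)
      have hcr := cross ⊤ R ⊤ le_top hABtop
      omega
    · -- a = ⊤ but b ≠ ⊤ : both sides empty
      have e1 : Finset.filter (fun j => ℓC (yC j) = (⊤ : EReal) ∧ ℓC (zC j) = b)
          Finset.univ = ∅ := by
        apply Finset.filter_false_of_mem
        intro j _ h
        apply hbT
        rw [← h.2]
        exact top_le_iff.1 (h.1 ▸ hYZC j)
      have e2 : Finset.filter (fun j => ℓD (yD j) = (⊤ : EReal) ∧ ℓD (zD j) = b)
          Finset.univ = ∅ := by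
        apply Finset.filter_false_of_mem
        intro j _ h
        apply hbT
        rw [← h.2]
        exact top_le_iff.1 (h.1 ▸ hYZD j)
      rw [e1, e2]
      simp
  · obtain ⟨α, rfl⟩ : ∃ α : ℝ, a = (α : EReal) := ⟨a.toReal, (EReal.coe_toReal haT haB).symm⟩
    by_cases hbT : b = ⊤
    · subst hbT
      rw [EReal.top_sub_coe] at hba
      exact absurd hba (by simp)
    by_cases hbB : b = ⊥
    · subst hbB
      have e1 : Finset.filter (fun j => ℓC (yC j) = ((α : ℝ) : EReal) ∧ ℓC (zC j) = ⊥)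
          Finset.univ = ∅ := by
        apply Finset.filter_false_of_mem
        intro j _ h
        have hle := hYZC j
        rw [h.1, h.2] at hle
        simp at hle
      have e2 : Finset.filter (fun j => ℓD (yD j) = ((α : ℝ) : EReal) ∧ ℓD (zD j) = ⊥)
          Finset.univ = ∅ := by
        apply Finset.filter_false_of_mem
        intro j _ h
        have hle := hYZD j
        rw [h.1, h.2] at hle
        simp at hle
      rw [e1, e2]
      simp
    obtain ⟨β, rfl⟩ : ∃ β : ℝ, b = (β : EReal) := ⟨b.toReal, (EReal.coe_toReal hbT hbB).symm⟩
    have hβα : β - η < α := by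
      have h' : ((β - α : ℝ) : EReal) < (η : EReal) := by
        rw [EReal.coe_sub]; exact hba
      have h'' := EReal.coe_lt_coe_iff.1 h'
      linarith
    set Ty : Finset EReal := (Finset.univ.image fun j => ℓC (yC j))
      ∪ (Finset.univ.image fun j => ℓD (yD j)) with hTy
    set Tz : Finset EReal := (Finset.univ.image fun j => ℓC (zC j))
      ∪ (Finset.univ.image fun j => ℓD (zD j)) with hTz
    set a' : EReal := max ((β - η : ℝ) : EReal)
      ((Ty.filter fun x => x < (α : EReal)).sup id) with ha'def
    set b' : EReal := (Tz.filter fun x => x < (β : EReal)).sup id with hb'def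
    have ha' : a' < (α : EReal) := by
      apply max_lt
      · exact_mod_cast hβα
      · rw [Finset.sup_lt_iff (EReal.bot_lt_coe α)]
        intro x hx
        exact (Finset.mem_filter.1 hx).2
    have hb' : b' < (β : EReal) := by
      rw [hb'def, Finset.sup_lt_iff (EReal.bot_lt_coe β)]
      intro x hx
      exact (Finset.mem_filter.1 hx).2
    have hgapYC : ∀ j, ℓC (yC j) < ((α : ℝ) : EReal) → ℓC (yC j) ≤ a' := by
      intro j hj
      refine le_trans ?_ (le_max_right _ _)
      exact Finset.le_sup (f := id) (Finset.mem_filter.2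
        ⟨Finset.mem_union_left _ (Finset.mem_image_of_mem _ (Finset.mem_univ j)), hj⟩)
    have hgapYD : ∀ j, ℓD (yD j) < ((α : ℝ) : EReal) → ℓD (yD j) ≤ a' := by
      intro j hj
      refine le_trans ?_ (le_max_right _ _)
      exact Finset.le_sup (f := id) (Finset.mem_filter.2
        ⟨Finset.mem_union_right _ (Finset.mem_image_of_mem _ (Finset.mem_univ j)), hj⟩)
    have hgapZC : ∀ j, ℓC (zC j) < ((β : ℝ) : EReal) → ℓC (zC j) ≤ b' := by
      intro j hj
      exact Finset.le_sup (f := id) (Finset.mem_filter.2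
        ⟨Finset.mem_union_left _ (Finset.mem_image_of_mem _ (Finset.mem_univ j)), hj⟩)
    have hgapZD : ∀ j, ℓD (zD j) < ((β : ℝ) : EReal) → ℓD (zD j) ≤ b' := by
      intro j hj
      exact Finset.le_sup (f := id) (Finset.mem_filter.2
        ⟨Finset.mem_union_right _ (Finset.mem_image_of_mem _ (Finset.mem_univ j)), hj⟩)
    have eqC : (Finset.filter (fun j => ℓC (yC j) = ((α : ℝ) : EReal)
            ∧ ℓC (zC j) = ((β : ℝ) : EReal)) Finset.univ).card
          + (Finset.filter (fun j => (E : EReal) < ℓC (yC j)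
            ∧ ℓC (yC j) ≤ a' ∧ ℓC (zC j) ≤ ((β : ℝ) : EReal)) Finset.univ).card
          + (Finset.filter (fun j => (E : EReal) < ℓC (yC j)
            ∧ ℓC (yC j) ≤ ((α : ℝ) : EReal) ∧ ℓC (zC j) ≤ b') Finset.univ).card
        = (Finset.filter (fun j => (E : EReal) < ℓC (yC j)
            ∧ ℓC (yC j) ≤ ((α : ℝ) : EReal) ∧ ℓC (zC j) ≤ ((β : ℝ) : EReal)) Finset.univ).card
          + (Finset.filter (fun j => (E : EReal) < ℓC (yC j)
            ∧ ℓC (yC j) ≤ a' ∧ ℓC (zC j) ≤ b') Finset.univ).card :=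
      count_id_fin (fun j => ℓC (yC j)) (fun j => ℓC (zC j)) (E : EReal)
        ((α : ℝ) : EReal) ((β : ℝ) : EReal) a' b' hEa ha' hb' hgapYC hgapZC
    have eqD : (Finset.filter (fun j => ℓD (yD j) = ((α : ℝ) : EReal)
            ∧ ℓD (zD j) = ((β : ℝ) : EReal)) Finset.univ).card
          + (Finset.filter (fun j => (E : EReal) < ℓD (yD j)
            ∧ ℓD (yD j) ≤ a' ∧ ℓD (zD j) ≤ ((β : ℝ) : EReal)) Finset.univ).card
          + (Finset.filter (fun j => (E : EReal) < ℓD (yD j)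
            ∧ ℓD (yD j) ≤ ((α : ℝ) : EReal) ∧ ℓD (zD j) ≤ b') Finset.univ).card
        = (Finset.filter (fun j => (E : EReal) < ℓD (yD j)
            ∧ ℓD (yD j) ≤ ((α : ℝ) : EReal) ∧ ℓD (zD j) ≤ ((β : ℝ) : EReal)) Finset.univ).card
          + (Finset.filter (fun j => (E : EReal) < ℓD (yD j)
            ∧ ℓD (yD j) ≤ a' ∧ ℓD (zD j) ≤ b') Finset.univ).card :=
      count_id_fin (fun j => ℓD (yD j)) (fun j => ℓD (zD j)) (E : EReal)
        ((α : ℝ) : EReal) ((β : ℝ) : EReal) a' b' hEa ha' hb' hgapYD hgapZD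
    have hAB1 : ∀ w : W, ℓW w ≤ ((β : ℝ) : EReal) → ℓW (Aof DC w - Aof DD w) ≤ a' := by
      intro w hw
      rcases eq_or_ne w 0 with rfl | hw0
      · have h0 : Aof DC (0 : W) - Aof DD 0 = 0 := by simp
        rw [h0, naname_zero hℓW]; exact bot_le
      · refine le_trans (le_of_lt (hdiff w hw0)) ?_
        refine le_trans (EReal.sub_le_sub hw le_rfl) ?_
        rw [← EReal.coe_sub]
        exact le_max_left _ _
    have hAB2 : ∀ w : W, ℓW w ≤ b' → ℓW (Aof DC w - Aof DD w) ≤ a' := by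
      intro w hw
      rcases eq_or_ne w 0 with rfl | hw0
      · have h0 : Aof DC (0 : W) - Aof DD 0 = 0 := by simp
        rw [h0, naname_zero hℓW]; exact bot_le
      · refine le_trans (le_of_lt (hdiff w hw0)) ?_
        refine le_trans (EReal.sub_le_sub hw le_rfl) ?_
        refine le_trans (EReal.sub_le_sub hb'.le le_rfl) ?_
        rw [← EReal.coe_sub]
        exact le_max_left _ _
    have cr1 := cross ((α : ℝ) : EReal) a' ((β : ℝ) : EReal) ha'.le hAB1
    have cr2 := cross ((α : ℝ) : EReal) a' b' ha'.le hAB2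
    omega
end

section
/- Let U → V → W be an exact sequence of persistence modules, each isomorphic to a finite (or locally finite) direct sum of interval modules. Then for every δ > 0, the number of bars of V of length greater than 2δ is at most the number of bars of U of length greater than δ plus the number of bars of W of length greater than δ: b_{2δ}(V) ≤ b_δ(U) + b_δ(W). -/
universe u u' u'' w w' w'' v

open Classical

structure PersistenceModule (k : Type v) [Field k] where
  V : ℝ → Type u
  [addCommGroup : ∀ t, AddCommGroup (V t)]
  [module : ∀ t, Module k (V t)]
  map : ∀ ⦃s t : ℝ⦄, s ≤ t → V s →ₗ[k] V t
  map_self : ∀ (t : ℝ) (x : V t), map le_rfl x = x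
  map_comp : ∀ ⦃s t r : ℝ⦄ (hst : s ≤ t) (htr : t ≤ r) (x : V s),
    map htr (map hst x) = map (hst.trans htr) x

attribute [instance] PersistenceModule.addCommGroup PersistenceModule.module

noncomputable def intervalFiber (k : Type v) [Field k] (I : Set ℝ) (t : ℝ) : Submodule k k :=
  if t ∈ I then ⊤ else ⊥

/-- The interval persistence module `kI` associated to an interval `I ⊆ ℝ`. -/
noncomputable def intervalModule (k : Type v) [Field k] (I : Set ℝ)
    (hI : I.OrdConnected) : PersistenceModule.{v} k where
  V t := ↥(intervalFiber k I t)
  map s t h :=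
    if ht : t ∈ I then
      LinearMap.codRestrict (intervalFiber k I t) (intervalFiber k I s).subtype
        (fun _ => by simp [intervalFiber, ht])
    else 0
  map_self t x := by
    try dsimp only
    by_cases ht : t ∈ I
    · rw [dif_pos ht]
      apply Subtype.ext
      rfl
    · rw [dif_neg ht]
      have hx : (x : k) ∈ (⊥ : Submodule k k) := by
        have := x.2
        simpa only [intervalFiber, if_neg ht] using this
      apply Subtype.ext
      simpa using (Submodule.mem_bot k).1 hx |>.symm
  map_comp s t r hst htr x := by
    try dsimp only
    by_cases hr : r ∈ I
    · rw [dif_pos hr, dif_pos hr]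
      apply Subtype.ext
      by_cases ht : t ∈ I
      · rw [dif_pos ht]
        rfl
      · rw [dif_neg ht]
        have hs : s ∉ I := fun hs => ht (hI.out hs hr ⟨hst, htr⟩)
        have hx : (x : k) ∈ (⊥ : Submodule k k) := by
          have := x.2
          simpa only [intervalFiber, if_neg hs] using this
        have hx0 : (x : k) = 0 := (Submodule.mem_bot k).1 hx
        exact hx0.symm
    · rw [dif_neg hr, dif_neg hr]
      simp

/-- The direct sum `⊕ᵢ k I_i` of interval modules, as a persistence module. -/
noncomputable def barcodeModule (k : Type v) [Field k] {ι : Type w} (I : ι → Set ℝ)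
    (hI : ∀ i, (I i).OrdConnected) : PersistenceModule.{max w v} k where
  V t := Π₀ i : ι, ↥(intervalFiber k (I i) t)
  map s t h := DFinsupp.mapRange.linearMap fun i => (intervalModule k (I i) (hI i)).map h
  map_self t x := by
    try dsimp only
    ext i
    try rw [DFinsupp.mapRange.linearMap_apply, DFinsupp.mapRange_apply]
    exact congrArg Subtype.val ((intervalModule k (I i) (hI i)).map_self t (x i))
  map_comp s t r hst htr x := by
    try dsimp only
    ext i
    try rw [DFinsupp.mapRange.linearMap_apply, DFinsupp.mapRange_apply,
      DFinsupp.mapRange.linearMap_apply, DFinsupp.mapRange_apply,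
      DFinsupp.mapRange.linearMap_apply, DFinsupp.mapRange_apply]
    exact congrArg Subtype.val ((intervalModule k (I i) (hI i)).map_comp hst htr (x i))

/-- Isomorphism of persistence modules. -/
def PersIso {k : Type v} [Field k] (M : PersistenceModule.{u} k)
    (N : PersistenceModule.{u'} k) : Prop :=
  ∃ e : ∀ t : ℝ, M.V t ≃ₗ[k] N.V t,
    ∀ ⦃s t : ℝ⦄ (h : s ≤ t) (x : M.V s), e t (M.map h x) = N.map h (e s x)

section Aux

variable {k : Type v} [Field k]

lemma fiber_val_eq_zero {I : Set ℝ} {t : ℝ} (h : t ∉ I) (v : ↥(intervalFiber k I t)) :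
    (v : k) = 0 := by
  have hv := v.2
  simp only [intervalFiber, if_neg h] at hv
  exact (Submodule.mem_bot k).1 hv

lemma intervalModule_map_val {I : Set ℝ} {hI : I.OrdConnected} {s t : ℝ} (hst : s ≤ t)
    (v : ↥(intervalFiber k I s)) :
    Subtype.val ((intervalModule k I hI).map hst v)
      = if t ∈ I then Subtype.val v else 0 := by
  have h2 : (intervalModule k I hI).map hst
      = (if ht : t ∈ I then
          LinearMap.codRestrict (intervalFiber k I t) (intervalFiber k I s).subtype
            (fun _ => by simp [intervalFiber, ht])
        else 0) := rfl
  by_cases ht : t ∈ I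
  · rw [if_pos ht, h2, dif_pos ht]
    rfl
  · rw [if_neg ht]
    exact fiber_val_eq_zero ht _

end Aux

/-- The map of the barcode module, with its domain/codomain expressed explicitly. -/
noncomputable def bmap (k : Type v) [Field k] {ι : Type w} (I : ι → Set ℝ)
    (hI : ∀ i, (I i).OrdConnected) {s t : ℝ} (hst : s ≤ t) :
    (Π₀ i : ι, ↥(intervalFiber k (I i) s)) →ₗ[k] (Π₀ i : ι, ↥(intervalFiber k (I i) t)) :=
  (barcodeModule k I hI).map hst

section Aux2

variable {k : Type v} [Field k]

lemma bmap_eq {ι : Type w} (I : ι → Set ℝ) (hI : ∀ i, (I i).OrdConnected)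
    {s t : ℝ} (hst : s ≤ t) (y : (barcodeModule k I hI).V s) :
    (barcodeModule k I hI).map hst y = bmap k I hI hst y := rfl

lemma bmap_apply {ι : Type w} (I : ι → Set ℝ) (hI : ∀ i, (I i).OrdConnected)
    {s t : ℝ} (hst : s ≤ t) (y : Π₀ i : ι, ↥(intervalFiber k (I i) s)) (j : ι) :
    (bmap k I hI hst y) j = (intervalModule k (I j) (hI j)).map hst (y j) := by
  have h1 : bmap k I hI hst y
      = DFinsupp.mapRange.linearMap (fun i => (intervalModule k (I i) (hI i)).map hst) y := rfl
  rw [h1]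
  rfl

lemma bmap_val {ι : Type w} (I : ι → Set ℝ) (hI : ∀ i, (I i).OrdConnected)
    {s t : ℝ} (hst : s ≤ t) (y : Π₀ i : ι, ↥(intervalFiber k (I i) s)) (j : ι) :
    Subtype.val ((bmap k I hI hst y) j)
      = if t ∈ I j then Subtype.val (y j) else 0 := by
  rw [bmap_apply, intervalModule_map_val]

end Aux2
/-- Extension of a vector given at time `s` to all times (zero before `s`). -/
noncomputable def extVec {k : Type v} [Field k] (M : PersistenceModule.{u} k) (s : ℝ)
    (x : M.V s) (t : ℝ) : M.V t :=
  if h : s ≤ t then M.map h x else 0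

/-- Persistent independence of a family of vectors with windows. -/
def PIfam {k : Type v} [Field k] (M : PersistenceModule.{u} k) {m : ℕ}
    (s t : Fin m → ℝ) (x : ∀ a, M.V (s a)) : Prop :=
  ∀ (τ : ℝ) (c : Fin m → k), (∑ a, c a • extVec M (s a) (x a) τ) = 0 →
    ∀ a, s a ≤ τ → τ ≤ t a → c a = 0

section Aux3

variable {k : Type v} [Field k]

lemma extVec_of_le {M : PersistenceModule.{u} k} {s : ℝ} {x : M.V s} {t : ℝ} (h : s ≤ t) :
    extVec M s x t = M.map h x := dif_pos h

lemma extVec_of_not_le {M : PersistenceModule.{u} k} {s : ℝ} {x : M.V s} {t : ℝ} (h : ¬ s ≤ t) :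
    extVec M s x t = 0 := dif_neg h

lemma map_extVec {M : PersistenceModule.{u} k} {s : ℝ} (x : M.V s) {t t' : ℝ} (h : s ≤ t)
    (h' : t ≤ t') : M.map h' (extVec M s x t) = extVec M s x t' := by
  rw [extVec_of_le h, extVec_of_le (h.trans h'), M.map_comp]

/-- Membership of two separated points forces the bar to be long. -/
lemma long_of_mem {δ a b : ℝ} (hδ : 0 < δ) (hab : δ < b - a) {I : Set ℝ}
    (ha : a ∈ I) (hb : b ∈ I) : ENNReal.ofReal δ < EMetric.diam I := by
  have h1 : ENNReal.ofReal δ < edist a b := by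
    rw [edist_dist, Real.dist_eq]
    have habs : δ < |a - b| := by
      rw [abs_sub_comm]
      exact lt_of_lt_of_le hab (le_abs_self _)
    rw [ENNReal.ofReal_lt_ofReal_iff (hδ.trans habs)]
    exact habs
  exact lt_of_lt_of_le h1 (EMetric.edist_le_diam_of_mem ha hb)

/-- Counting lemma: a persistently independent family with windows longer than `δ`,
in a module isomorphic to a barcode module, is bounded by the number of long bars. -/
lemma count_le_of_PIfam {Y : PersistenceModule.{u} k} {ι : Type w} {I : ι → Set ℝ}
    {hI : ∀ i, (I i).OrdConnected} (e : ∀ t : ℝ, Y.V t ≃ₗ[k] (barcodeModule k I hI).V t)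
    (he : ∀ ⦃s t : ℝ⦄ (h : s ≤ t) (x : Y.V s),
      e t (Y.map h x) = (barcodeModule k I hI).map h (e s x))
    {δ : ℝ} (hδ : 0 < δ)
    (hfin : {j : ι | ENNReal.ofReal δ < EMetric.diam (I j)}.Finite)
    {m : ℕ} (s t : Fin m → ℝ) (hlen : ∀ a, δ < t a - s a)
    (z : ∀ a, Y.V (s a)) (hPI : PIfam Y s t z) :
    m ≤ hfin.toFinset.card := by
  classical
  set F := hfin.toFinset with hF
  set Ey : ∀ (u : ℝ), Y.V u → (Π₀ j : ι, ↥(intervalFiber k (I j) u)) :=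
    fun u y => e u y with hEy
  set rowfull : Fin m → ι → k := fun a j => Subtype.val (Ey (s a) (z a) j) with hrowfull
  set row : Fin m → (↥F → k) := fun a j => rowfull a (j : ι) with hrow
  by_cases hind : LinearIndependent k row
  · have h1 := hind.fintype_card_le_finrank
    rw [Module.finrank_fintype_fun_eq_card] at h1
    simpa using h1
  · exfalso
    obtain ⟨c, hc0, a1, hc1⟩ := Fintype.not_linearIndependent_iff.1 hind
    set Sp : Finset (Fin m) := Finset.univ.filter (fun a => c a ≠ 0) with hSp
    have hSpne : Sp.Nonempty := ⟨a1, by simp [hSp, hc1]⟩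
    obtain ⟨a0, ha0Sp, ha0max⟩ := Sp.exists_max_image t hSpne
    set τ := t a0 with hτ
    have hslt : ∀ a : Fin m, s a < t a := fun a => by linarith [hlen a]
    have hborn : ∀ a ∈ Sp, s a ≤ τ := fun a ha =>
      le_trans (le_of_lt (hslt a)) (ha0max a ha)
    -- per-component value of each summand
    have hval : ∀ (a : Fin m) (j : ι), Subtype.val (Ey τ (extVec Y (s a) (z a) τ) j)
        = if s a ≤ τ then (if τ ∈ I j then rowfull a j else 0) else 0 := by
      intro a j
      by_cases hb : s a ≤ τ
      · rw [if_pos hb]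
        have h2 : Ey τ (extVec Y (s a) (z a) τ) = bmap k I hI hb (Ey (s a) (z a)) := by
          rw [hEy]
          dsimp only
          rw [extVec_of_le hb, he hb (z a)]
          rfl
        rw [h2, bmap_val]
      · rw [if_neg hb]
        have h2 : Ey τ (extVec Y (s a) (z a) τ) = 0 := by
          rw [hEy]
          dsimp only
          rw [extVec_of_not_le hb, map_zero]
          rfl
        rw [h2]
        simp
    -- the combination vanishes at time τ
    have hcomb : (∑ a, c a • extVec Y (s a) (z a) τ) = 0 := by
      apply (e τ).injective
      rw [map_zero]
      have hEysum : e τ (∑ a, c a • extVec Y (s a) (z a) τ)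
          = ∑ a, c a • (e τ (extVec Y (s a) (z a) τ)) := by
        rw [map_sum]
        exact Finset.sum_congr rfl fun a _ => map_smul _ _ _
      rw [hEysum]
      show (∑ a, c a • Ey τ (extVec Y (s a) (z a) τ))
          = (0 : Π₀ j : ι, ↥(intervalFiber k (I j) τ))
      apply DFinsupp.ext
      intro j
      apply Subtype.ext
      rw [DFinsupp.finset_sum_apply]
      have hcoe : Subtype.val ((∑ a, (c a • Ey τ (extVec Y (s a) (z a) τ)) j))
          = ∑ a, c a * Subtype.val (Ey τ (extVec Y (s a) (z a) τ) j) := by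
        rw [AddSubmonoidClass.coe_finset_sum]
        exact Finset.sum_congr rfl fun a _ => by
          rw [DFinsupp.smul_apply, SetLike.val_smul, smul_eq_mul]
      rw [hcoe]
      have hzero : Subtype.val ((0 : Π₀ j : ι, ↥(intervalFiber k (I j) τ)) j) = 0 := by simp
      rw [hzero]
      by_cases hj : τ ∈ I j
      · by_cases hjF : j ∈ F
        · have hc0j := congrFun hc0 ⟨j, hjF⟩
          simp only [Finset.sum_apply, Pi.smul_apply, smul_eq_mul, Pi.zero_apply] at hc0j
          rw [← hc0j]
          exact Finset.sum_congr rfl fun a _ => by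
            rw [hval a j]
            by_cases hca : c a = 0
            · rw [hca]; ring
            · rw [if_pos (hborn a (by simp [hSp, hca])), if_pos hj]
        · apply Finset.sum_eq_zero
          intro a _
          rw [hval a j]
          by_cases hca : c a = 0
          · rw [hca]; ring
          · have hba : s a ≤ τ := hborn a (by simp [hSp, hca])
            rw [if_pos hba, if_pos hj]
            have hrf : rowfull a j = 0 := by
              by_contra hne
              have hsaI : s a ∈ I j := by
                by_contra hsa
                exact hne (fiber_val_eq_zero hsa _)
              have htaI : t a ∈ I j :=
                (hI j).out hsaI hj ⟨le_of_lt (hslt a), ha0max a (by simp [hSp, hca])⟩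
              have : ENNReal.ofReal δ < EMetric.diam (I j) :=
                long_of_mem hδ (hlen a) hsaI htaI
              exact hjF (by rw [hF, Set.Finite.mem_toFinset]; exact this)
            rw [hrf]
            ring
      · apply Finset.sum_eq_zero
        intro a _
        rw [hval a j]
        by_cases hba : s a ≤ τ
        · rw [if_pos hba, if_neg hj]; ring
        · rw [if_neg hba]; ring
    have := hPI τ c hcomb a0 (hborn a0 ha0Sp) le_rfl
    rw [hSp] at ha0Sp
    simp only [Finset.mem_filter] at ha0Sp
    exact ha0Sp.2 this

end Aux3
section Echelon

variable {k : Type v} [Field k]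

/-- Vectors supported on coordinates `< n`. -/
def lowerSub (k : Type v) [Field k] (m : ℕ) (n : ℕ) : Submodule k (Fin m → k) where
  carrier := {v | ∀ i : Fin m, n ≤ (i : ℕ) → v i = 0}
  add_mem' := fun ha hb i hi => by
    simp only [Pi.add_apply, ha i hi, hb i hi, add_zero]
  zero_mem' := fun i _ => rfl
  smul_mem' := fun c v hv i hi => by
    simp only [Pi.smul_apply, hv i hi, smul_zero]

lemma exists_reduced_basis {m : ℕ} (K : Submodule k (Fin m → k)) :
    ∃ (r : ℕ) (q : Fin r → Fin m) (γ : Fin r → (Fin m → k)),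
      r = Module.finrank k ↥K ∧ (∀ l, γ l ∈ K) ∧
      (∀ l (j : Fin m), ((q l : ℕ) < (j : ℕ)) → γ l j = 0) ∧
      (∀ l l', γ l (q l') = if l = l' then 1 else 0) := by
  classical
  set N : ℕ → Submodule k (Fin m → k) := fun n => K ⊓ lowerSub k m n with hN
  have hNle : ∀ n, N n ≤ N (n + 1) := by
    intro n v hv
    exact ⟨hv.1, fun i hi => hv.2 i (le_trans (Nat.le_succ n) hi)⟩
  have hN0 : N 0 = ⊥ := by
    apply le_bot_iff.1
    intro v hv
    have : v = 0 := funext fun i => hv.2 i (Nat.zero_le _)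
    simp [this]
  have hNm : N m = K := by
    apply le_antisymm inf_le_left
    intro v hv
    exact ⟨hv, fun i hi => absurd hi (not_le.2 i.2)⟩
  -- the membership criterion for N n
  have hmemN : ∀ (n : ℕ) (v : Fin m → k), v ∈ N n ↔ (v ∈ K ∧ ∀ i : Fin m, n ≤ (i : ℕ) → v i = 0) :=
    fun n v => Iff.rfl
  -- dimension step
  have hchain : ∀ n : ℕ, n < m → Module.finrank k ↥(N (n + 1))
      = Module.finrank k ↥(N n) + (if N n = N (n + 1) then 0 else 1) := by
    intro n hn
    set ev : ↥(N (n + 1)) →ₗ[k] k := (LinearMap.proj ⟨n, hn⟩).comp (N (n + 1)).subtype with hev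
    have hker : LinearMap.ker ev = Submodule.comap (N (n + 1)).subtype (N n) := by
      ext v
      simp only [LinearMap.mem_ker, Submodule.mem_comap]
      constructor
      · intro h0
        refine ⟨v.2.1, fun i hi => ?_⟩
        rcases Nat.eq_or_lt_of_le hi with heq | hlt
        · have : (⟨n, hn⟩ : Fin m) = i := Fin.ext heq
          rw [← this]
          exact h0
        · exact v.2.2 i hlt
      · intro hv
        exact hv.2 ⟨n, hn⟩ le_rfl
    have hkerrank : Module.finrank k ↥(LinearMap.ker ev) = Module.finrank k ↥(N n) := by
      rw [hker]
      exact LinearEquiv.finrank_eq (Submodule.comapSubtypeEquivOfLe (hNle n))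
    have hrn := LinearMap.finrank_range_add_finrank_ker ev
    rw [hkerrank] at hrn
    by_cases heq : N n = N (n + 1)
    · have hrange : LinearMap.range ev = ⊥ := by
        apply le_bot_iff.1
        rintro x ⟨v, rfl⟩
        have hv : (v : Fin m → k) ∈ N n := heq.symm ▸ (v.2 : (v : Fin m → k) ∈ N (n+1))
        exact hv.2 ⟨n, hn⟩ le_rfl
      rw [if_pos heq]
      rw [hrange] at hrn
      simpa using hrn.symm
    · have hnle2 : ¬ (N (n + 1) ≤ N n) := fun hle => heq (le_antisymm (hNle n) hle)
      obtain ⟨x, hx1, hx2⟩ := SetLike.not_le_iff_exists.1 hnle2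
      have hevx : ev ⟨x, hx1⟩ ≠ 0 := by
        intro h0
        apply hx2
        refine ⟨hx1.1, fun i hi => ?_⟩
        rcases Nat.eq_or_lt_of_le hi with heq' | hlt
        · have : (⟨n, hn⟩ : Fin m) = i := Fin.ext heq'
          rw [← this]
          exact h0
        · exact hx1.2 i hlt
      have hrange : Module.finrank k ↥(LinearMap.range ev) = 1 := by
        have hle1 : Module.finrank k ↥(LinearMap.range ev) ≤ 1 := by
          have := Submodule.finrank_le (LinearMap.range ev)
          simpa using this
        have hne : LinearMap.range ev ≠ ⊥ := by
          intro h0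
          apply hevx
          have : ev ⟨x, hx1⟩ ∈ LinearMap.range ev := ⟨_, rfl⟩
          rw [h0] at this
          exact (Submodule.mem_bot k).1 this
        have h1le : 1 ≤ Module.finrank k ↥(LinearMap.range ev) := by
          by_contra hcon
          push_neg at hcon
          interval_cases h : Module.finrank k ↥(LinearMap.range ev)
          · exact hne (Submodule.finrank_eq_zero.1 h)
        omega
      rw [if_neg heq]
      omega
  -- counting
  set P : Finset ℕ := (Finset.range m).filter (fun i => ¬ N i = N (i + 1)) with hP
  have hcount : ∀ n : ℕ, n ≤ m →
      Module.finrank k ↥(N n) = ((Finset.range n).filter (fun i => ¬ N i = N (i + 1))).card := by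
    intro n
    induction n with
    | zero => intro _; simp [hN0]
    | succ n ih =>
      intro hnm
      have hn : n < m := Nat.lt_of_succ_le hnm
      rw [hchain n hn, ih (le_of_lt hn), Finset.range_add_one, Finset.filter_insert]
      by_cases heq : N n = N (n + 1)
      · rw [if_neg (not_not_intro heq)]
        simp [heq]
      · rw [if_pos heq]
        rw [Finset.card_insert_of_notMem (by simp)]
        simp [heq]
  have hrK : Module.finrank k ↥K = P.card := by
    rw [← hNm, hcount m le_rfl]
  -- enumerate the pivots in increasing order
  set q' := P.orderIsoOfFin rfl with hq'
  have hqmem : ∀ l : Fin P.card, ((q' l : ℕ)) ∈ P := fun l => (q' l).2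
  have hqPrange : ∀ p ∈ P, p < m := by
    intro p hp
    have h2 : p ∈ Finset.range m := Finset.mem_of_subset (Finset.filter_subset _ _) hp
    exact Finset.mem_range.1 h2
  have hqPpred : ∀ p ∈ P, ¬ N p = N (p + 1) := by
    intro p hp
    exact (Finset.mem_filter.1 hp).2
  have hqltm : ∀ l : Fin P.card, ((q' l : ℕ)) < m := fun l => hqPrange _ (hqmem l)
  set q : Fin P.card → Fin m := fun l => ⟨(q' l : ℕ), hqltm l⟩ with hq
  have hqval : ∀ l, (q l : ℕ) = ((q' l : ↥P) : ℕ) := fun l => rfl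
  have hqinj : Function.Injective (fun l => ((q' l : ↥P) : ℕ)) :=
    Subtype.coe_injective.comp q'.injective
  -- dimension of the pivot filtration spaces
  have hdiml : ∀ l : Fin P.card, Module.finrank k ↥(N ((q l : ℕ) + 1)) = (l : ℕ) + 1 := by
    intro l
    rw [hcount ((q l : ℕ) + 1) (Nat.succ_le_of_lt (hqltm l))]
    have hset : (Finset.range ((q l : ℕ) + 1)).filter (fun i => ¬ N i = N (i + 1))
        = Finset.image (fun i : Fin P.card => ((q' i : ↥P) : ℕ)) (Finset.Iic l) := by
      ext p
      simp only [Finset.mem_filter, Finset.mem_range, Nat.lt_succ_iff, Finset.mem_image,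
        Finset.mem_Iic]
      constructor
      · rintro ⟨h1, h2⟩
        have hpP : p ∈ P := Finset.mem_filter.2 ⟨Finset.mem_range.2 (lt_of_le_of_lt h1 (hqltm l)), h2⟩
        refine ⟨q'.symm ⟨p, hpP⟩, ?_, ?_⟩
        · have : q' (q'.symm ⟨p, hpP⟩) ≤ q' l := by
            rw [OrderIso.apply_symm_apply]
            exact h1
          exact q'.le_iff_le.1 this
        · show ((q' (q'.symm ⟨p, hpP⟩) : ↥P) : ℕ) = p
          rw [OrderIso.apply_symm_apply]
      · rintro ⟨i, hi, rfl⟩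
        have h1 : ((q' i : ↥P) : ℕ) ≤ (q l : ℕ) := by
          rw [hqval]
          exact Subtype.coe_le_coe.2 (q'.le_iff_le.2 hi)
        exact ⟨h1, hqPpred _ (hqmem i)⟩
    rw [hset, Finset.card_image_of_injective _ hqinj, Fin.card_Iic]
  -- injectivity of the pivot-evaluation on N (q l + 1)
  have hinj : ∀ (l : Fin P.card) (v : Fin m → k), v ∈ N ((q l : ℕ) + 1) →
      (∀ l' : Fin P.card, (l' : ℕ) ≤ (l : ℕ) → v (q l') = 0) → v = 0 := by
    intro l v hv hvz
    by_contra hvne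
    have hex : ∃ i : Fin m, v i ≠ 0 := by
      by_contra hno
      push_neg at hno
      exact hvne (funext hno)
    set Sv : Finset (Fin m) := Finset.univ.filter (fun i => v i ≠ 0) with hSv
    have hSvne : Sv.Nonempty := by
      obtain ⟨i, hi⟩ := hex
      exact ⟨i, by simp [hSv, hi]⟩
    obtain ⟨nn, hnnSv, hnnmax⟩ := Sv.exists_max_image (fun i => (i : ℕ)) hSvne
    have hvnn : v nn ≠ 0 := by
      rw [hSv] at hnnSv
      simpa using hnnSv
    have hvN1 : v ∈ N ((nn : ℕ) + 1) := by
      refine ⟨hv.1, fun i hi => ?_⟩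
      by_contra hvi
      have : (i : ℕ) ≤ (nn : ℕ) := hnnmax i (by simp [hSv, hvi])
      omega
    have hvN0 : v ∉ N (nn : ℕ) := fun hcon => hvnn (hcon.2 nn le_rfl)
    have hPmem : (nn : ℕ) ∈ P := by
      refine Finset.mem_filter.2 ⟨Finset.mem_range.2 nn.2, fun hcon => hvN0 ?_⟩
      rw [hcon]
      exact hvN1
    set l0 := q'.symm ⟨(nn : ℕ), hPmem⟩ with hl0
    have hql0 : (q l0 : ℕ) = (nn : ℕ) := by
      rw [hqval, hl0, OrderIso.apply_symm_apply]
    have hle : (nn : ℕ) ≤ (q l : ℕ) := by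
      by_contra hcon
      push_neg at hcon
      exact hvnn (hv.2 nn hcon)
    have hl0le : (l0 : ℕ) ≤ (l : ℕ) := by
      have h2 : q' l0 ≤ q' l := by
        apply Subtype.coe_le_coe.1
        show ((q' l0 : ↥P) : ℕ) ≤ ((q' l : ↥P) : ℕ)
        rw [hl0, OrderIso.apply_symm_apply]
        exact hle
      exact q'.le_iff_le.1 h2
    have := hvz l0 hl0le
    rw [show q l0 = nn from Fin.ext hql0] at this
    exact hvnn this
  refine ⟨P.card, q, ?_⟩
  have hgam : ∀ l : Fin P.card, ∃ γ : Fin m → k, γ ∈ N ((q l : ℕ) + 1) ∧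
      (∀ l' : Fin P.card, (l' : ℕ) ≤ (l : ℕ) → γ (q l') = if l = l' then 1 else 0) := by
    intro l
    set D := N ((q l : ℕ) + 1) with hD
    have hlr : (l : ℕ) + 1 ≤ P.card := l.2
    set ψ : ↥D →ₗ[k] (Fin ((l : ℕ) + 1) → k) :=
      (LinearMap.pi (fun i : Fin ((l : ℕ) + 1) =>
        LinearMap.proj (q (Fin.castLE hlr i)))).comp D.subtype with hψ
    have hψapp : ∀ (v : ↥D) (i : Fin ((l : ℕ) + 1)), ψ v i = (v : Fin m → k) (q (Fin.castLE hlr i)) :=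
      fun v i => rfl
    have hcast : ∀ (l' : Fin P.card) (hl' : (l' : ℕ) ≤ (l : ℕ)),
        Fin.castLE hlr (⟨(l' : ℕ), by omega⟩ : Fin ((l : ℕ) + 1)) = l' := by
      intro l' hl'
      apply Fin.ext
      simp
    have hψinj : Function.Injective ψ := by
      intro v w hvw
      apply Subtype.ext
      have hsub : ((v : Fin m → k) - (w : Fin m → k)) ∈ D := D.sub_mem v.2 w.2
      have hz : (v : Fin m → k) - (w : Fin m → k) = 0 := by
        apply hinj l _ hsub
        intro l' hl'
        have h2 := congrFun hvw (⟨(l' : ℕ), by omega⟩ : Fin ((l : ℕ) + 1))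
        rw [hψapp, hψapp, hcast l' hl'] at h2
        simp [Pi.sub_apply, h2]
      exact sub_eq_zero.1 hz
    have hdim : Module.finrank k ↥D = Module.finrank k (Fin ((l : ℕ) + 1) → k) := by
      rw [hD, hdiml l, Module.finrank_fintype_fun_eq_card, Fintype.card_fin]
    set ψe := LinearMap.linearEquivOfInjective ψ hψinj hdim with hψe
    set target : Fin ((l : ℕ) + 1) → k := fun i => if (i : ℕ) = (l : ℕ) then 1 else 0 with htarget
    set γv := ψe.symm target with hγv
    refine ⟨(γv : Fin m → k), γv.2, ?_⟩
    intro l' hl'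
    have hψγ : ψ γv = target := by
      have h3 : ψ (ψe.symm target) = ψe (ψe.symm target) := by
        rw [hψe]
        rfl
      rw [hγv, h3, LinearEquiv.apply_symm_apply]
    have h4 := congrFun hψγ (⟨(l' : ℕ), by omega⟩ : Fin ((l : ℕ) + 1))
    rw [hψapp, hcast l' hl'] at h4
    rw [h4, htarget]
    simp only
    by_cases heq : l = l'
    · rw [if_pos (by rw [heq]), if_pos heq]
    · rw [if_neg (fun hcon : (l' : ℕ) = (l : ℕ) => heq (Fin.ext hcon.symm)), if_neg heq]
  choose γ hγmem hγpiv using hgam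
  have hγK : ∀ l, γ l ∈ K := fun l => (Submodule.mem_inf.1 (hγmem l)).1
  have hγlow : ∀ l (j : Fin m), ((q l : ℕ) < (j : ℕ)) → γ l j = 0 := fun l j hj =>
    (Submodule.mem_inf.1 (hγmem l)).2 j hj
  refine ⟨γ, hrK.symm, hγK, hγlow, ?_⟩
  intro l l'
  rcases le_or_gt (l' : ℕ) (l : ℕ) with hle | hlt
  · exact hγpiv l l' hle
  · have hqlt : (q l : ℕ) < (q l' : ℕ) := by
      rw [hqval, hqval]
      exact Subtype.coe_lt_coe.2 (q'.lt_iff_lt.2 hlt)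
    rw [hγlow l (q l') hqlt]
    rw [if_neg (fun hcon => by rw [hcon] at hlt; omega)]

end Echelon
section Core

variable {k : Type v} [Field k]

lemma core_count
    {U : PersistenceModule.{u} k} {V : PersistenceModule.{u'} k} {W : PersistenceModule.{u''} k}
    (f : ∀ t : ℝ, U.V t →ₗ[k] V.V t) (g : ∀ t : ℝ, V.V t →ₗ[k] W.V t)
    (hf : ∀ ⦃s t : ℝ⦄ (h : s ≤ t) (x : U.V s), f t (U.map h x) = V.map h (f s x))
    (hg : ∀ ⦃s t : ℝ⦄ (h : s ≤ t) (x : V.V s), g t (V.map h x) = W.map h (g s x))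
    (hexact : ∀ t : ℝ, LinearMap.range (f t) = LinearMap.ker (g t))
    {ιU : Type w} {IU : ιU → Set ℝ} {hIU : ∀ i, (IU i).OrdConnected}
    (eU : ∀ t : ℝ, U.V t ≃ₗ[k] (barcodeModule k IU hIU).V t)
    (heU : ∀ ⦃s t : ℝ⦄ (h : s ≤ t) (x : U.V s),
      eU t (U.map h x) = (barcodeModule k IU hIU).map h (eU s x))
    {ιW : Type w''} {IW : ιW → Set ℝ} {hIW : ∀ i, (IW i).OrdConnected}
    (eW : ∀ t : ℝ, W.V t ≃ₗ[k] (barcodeModule k IW hIW).V t)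
    (heW : ∀ ⦃s t : ℝ⦄ (h : s ≤ t) (x : W.V s),
      eW t (W.map h x) = (barcodeModule k IW hIW).map h (eW s x))
    {δ : ℝ} (hδ : 0 < δ)
    (hfinU : {j : ιU | ENNReal.ofReal δ < EMetric.diam (IU j)}.Finite)
    (hfinW : {j : ιW | ENNReal.ofReal δ < EMetric.diam (IW j)}.Finite)
    {m : ℕ} (α μ β : Fin m → ℝ)
    (hαμ : ∀ a, δ < μ a - α a) (hμβ : ∀ a, δ < β a - μ a)
    (hμmono : Monotone μ)
    (x : ∀ a, V.V (α a)) (hPI : PIfam V α β x) :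
    m ≤ hfinU.toFinset.card + hfinW.toFinset.card := by
  classical
  set FW := hfinW.toFinset with hFW
  set FU := hfinU.toFinset with hFU
  have hαμ' : ∀ a, α a ≤ μ a := fun a => le_of_lt (by linarith [hαμ a])
  -- W-side coefficients
  set EyW : ∀ (u : ℝ), W.V u → (Π₀ j : ιW, ↥(intervalFiber k (IW j) u)) :=
    fun u y => eW u y with hEyW
  set cW : Fin m → ιW → k := fun a j => Subtype.val (EyW (α a) (g (α a) (x a)) j) with hcW
  set ΘW : (Fin m → k) →ₗ[k] (↥FW → k) :=
    { toFun := fun c j => ∑ a, c a * cW a (j : ιW)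
      map_add' := by
        intro c d
        funext j
        simp only [Pi.add_apply, add_mul, Finset.sum_add_distrib]
      map_smul' := by
        intro r c
        funext j
        simp only [Pi.smul_apply, smul_eq_mul, RingHom.id_apply, Finset.mul_sum, mul_assoc] } with hΘW
  set K := LinearMap.ker ΘW with hK
  -- rank-nullity
  have hmB : m ≤ FW.card + Module.finrank k ↥K := by
    have h1 := LinearMap.finrank_range_add_finrank_ker ΘW
    rw [Module.finrank_fintype_fun_eq_card, Fintype.card_fin] at h1
    rw [← hK] at h1
    have h2 : Module.finrank k ↥(LinearMap.range ΘW) ≤ FW.card := by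
      have h3 := Submodule.finrank_le (LinearMap.range ΘW)
      rw [Module.finrank_fintype_fun_eq_card, Fintype.card_coe] at h3
      exact h3
    omega
  -- echelon basis of K
  obtain ⟨r, q, γ, hr, hγK, hγlow, hγpiv⟩ := exists_reduced_basis K
  set σ : Fin r → ℝ := fun l => μ (q l) with hσ
  set ε : Fin r → ℝ := fun l => β (q l) with hε
  have hsuppμ : ∀ (l : Fin r) (i : Fin m), γ l i ≠ 0 → μ i ≤ σ l := by
    intro l i hne
    have hile : (i : ℕ) ≤ (q l : ℕ) := by
      by_contra hcon
      push_neg at hcon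
      exact hne (hγlow l i hcon)
    exact hμmono hile
  have hsuppα : ∀ (l : Fin r) (i : Fin m), γ l i ≠ 0 → α i ≤ σ l := fun l i hne =>
    le_trans (hαμ' i) (hsuppμ l i hne)
  -- the kernel combinations at their pivot times
  set Z : ∀ l : Fin r, V.V (σ l) := fun l => ∑ i, γ l i • extVec V (α i) (x i) (σ l) with hZ
  -- they are killed by g
  have hgZ : ∀ l, g (σ l) (Z l) = 0 := by
    intro l
    apply (eW (σ l)).injective
    rw [map_zero]
    have h1 : eW (σ l) (g (σ l) (Z l))
        = ∑ i, γ l i • (eW (σ l) (g (σ l) (extVec V (α i) (x i) (σ l)))) := by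
      rw [hZ]
      dsimp only
      rw [map_sum, map_sum]
      exact Finset.sum_congr rfl fun i _ => by rw [map_smul, map_smul]
    rw [h1]
    show (∑ i, γ l i • EyW (σ l) (g (σ l) (extVec V (α i) (x i) (σ l))))
        = (0 : Π₀ j : ιW, ↥(intervalFiber k (IW j) (σ l)))
    apply DFinsupp.ext
    intro j
    apply Subtype.ext
    rw [DFinsupp.finset_sum_apply]
    have hcoe : Subtype.val ((∑ i, (γ l i • EyW (σ l) (g (σ l) (extVec V (α i) (x i) (σ l)))) j))
        = ∑ i, γ l i * Subtype.val (EyW (σ l) (g (σ l) (extVec V (α i) (x i) (σ l))) j) := by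
      rw [AddSubmonoidClass.coe_finset_sum]
      exact Finset.sum_congr rfl fun i _ => by
        rw [DFinsupp.smul_apply, SetLike.val_smul, smul_eq_mul]
    rw [hcoe]
    have hzeroW : Subtype.val ((0 : Π₀ j : ιW, ↥(intervalFiber k (IW j) (σ l))) j) = 0 := by simp
    rw [hzeroW]
    -- value of each summand
    have hval : ∀ i : Fin m, Subtype.val (EyW (σ l) (g (σ l) (extVec V (α i) (x i) (σ l))) j)
        = if α i ≤ σ l then (if σ l ∈ IW j then cW i j else 0) else 0 := by
      intro i
      by_cases hb : α i ≤ σ l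
      · rw [if_pos hb]
        have h2 : EyW (σ l) (g (σ l) (extVec V (α i) (x i) (σ l)))
            = bmap k IW hIW hb (EyW (α i) (g (α i) (x i))) := by
          rw [hEyW]
          dsimp only
          rw [extVec_of_le hb, hg hb (x i), heW hb (g (α i) (x i))]
          rfl
        rw [h2, bmap_val]
      · rw [if_neg hb]
        have h2 : EyW (σ l) (g (σ l) (extVec V (α i) (x i) (σ l))) = 0 := by
          rw [hEyW]
          dsimp only
          rw [extVec_of_not_le hb, map_zero, map_zero]
          rfl
        rw [h2]
        simp
    by_cases hj : σ l ∈ IW j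
    · by_cases hjF : j ∈ FW
      · have hKl : ΘW (γ l) = 0 := hγK l
        have hKlj := congrFun hKl ⟨j, hjF⟩
        have hKlj' : (∑ i, γ l i * cW i j) = 0 := hKlj
        rw [← hKlj']
        exact Finset.sum_congr rfl fun i _ => by
          rw [hval i]
          by_cases hγi : γ l i = 0
          · rw [hγi]; ring
          · rw [if_pos (hsuppα l i hγi), if_pos hj]
      · apply Finset.sum_eq_zero
        intro i _
        rw [hval i]
        by_cases hγi : γ l i = 0
        · rw [hγi]; ring
        · rw [if_pos (hsuppα l i hγi), if_pos hj]
          have hcWz : cW i j = 0 := by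
            by_contra hne
            have hαI : α i ∈ IW j := by
              by_contra hcon
              exact hne (fiber_val_eq_zero hcon _)
            have hμI : μ i ∈ IW j :=
              (hIW j).out hαI hj ⟨hαμ' i, hsuppμ l i hγi⟩
            exact hjF (by
              rw [hFW, Set.Finite.mem_toFinset]
              exact long_of_mem hδ (hαμ i) hαI hμI)
          rw [hcWz]
          ring
    · apply Finset.sum_eq_zero
      intro i _
      rw [hval i]
      by_cases hb : α i ≤ σ l
      · rw [if_pos hb, if_neg hj]; ring
      · rw [if_neg hb]; ring
  -- lift through f using exactness
  have hZker : ∀ l, Z l ∈ LinearMap.ker (g (σ l)) := fun l => LinearMap.mem_ker.2 (hgZ l)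
  have hZrange : ∀ l, Z l ∈ LinearMap.range (f (σ l)) := fun l => by
    rw [hexact (σ l)]
    exact hZker l
  choose u hu using fun l => hZrange l
  -- the U-side family is persistently independent
  have hPIU : PIfam U σ ε u := by
    intro τ d hsum l0 hb0 hw0
    set c : Fin m → k := fun i => ∑ l, (if σ l ≤ τ then d l else 0) * γ l i with hc
    have hVcomb : (∑ i, c i • extVec V (α i) (x i) τ) = 0 := by
      have h1 : (∑ i, c i • extVec V (α i) (x i) τ)
          = ∑ l, (if σ l ≤ τ then d l else 0) • (∑ i, γ l i • extVec V (α i) (x i) τ) := by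
        calc (∑ i, c i • extVec V (α i) (x i) τ)
            = ∑ i, ∑ l, ((if σ l ≤ τ then d l else 0) * γ l i) • extVec V (α i) (x i) τ :=
              Finset.sum_congr rfl fun i _ => by
                rw [hc]
                dsimp only
                rw [Finset.sum_smul]
          _ = ∑ l, ∑ i, ((if σ l ≤ τ then d l else 0) * γ l i) • extVec V (α i) (x i) τ :=
              Finset.sum_comm
          _ = ∑ l, (if σ l ≤ τ then d l else 0) • (∑ i, γ l i • extVec V (α i) (x i) τ) :=
              Finset.sum_congr rfl fun l _ => by
                rw [Finset.smul_sum]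
                exact Finset.sum_congr rfl fun i _ => mul_smul _ _ _
      have h2 : ∀ l : Fin r, (if σ l ≤ τ then d l else 0) •
            (∑ i, γ l i • extVec V (α i) (x i) τ)
          = d l • (f τ (extVec U (σ l) (u l) τ)) := by
        intro l
        by_cases hbl : σ l ≤ τ
        · rw [if_pos hbl, extVec_of_le hbl, hf hbl (u l), hu l]
          congr 1
          have h3 : V.map hbl (Z l) = ∑ i, γ l i • V.map hbl (extVec V (α i) (x i) (σ l)) := by
            rw [hZ]
            dsimp only
            rw [map_sum]
            exact Finset.sum_congr rfl fun i _ => map_smul _ _ _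
          rw [h3]
          exact (Finset.sum_congr rfl fun i _ => by
            by_cases hγi : γ l i = 0
            · rw [hγi, zero_smul, zero_smul]
            · rw [map_extVec (x i) (hsuppα l i hγi) hbl]).symm
        · rw [if_neg hbl, extVec_of_not_le hbl, map_zero, smul_zero, zero_smul]
      rw [h1, Finset.sum_congr rfl fun l _ => h2 l]
      have h4 : (∑ l, d l • (f τ (extVec U (σ l) (u l) τ)))
          = f τ (∑ l, d l • extVec U (σ l) (u l) τ) := by
        rw [map_sum]
        exact Finset.sum_congr rfl fun l _ => (map_smul _ _ _).symm
      rw [h4, hsum, map_zero]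
    have hcq := hPI τ c hVcomb (q l0) (le_trans (hαμ' (q l0)) hb0) hw0
    have hcval : c (q l0) = d l0 := by
      rw [hc]
      dsimp only
      rw [Finset.sum_eq_single l0]
      · rw [hγpiv l0 l0, if_pos rfl, mul_one, if_pos hb0]
      · intro l _ hlne
        rw [hγpiv l l0, if_neg hlne, mul_zero]
      · intro hcon
        exact absurd (Finset.mem_univ l0) hcon
    rw [hcval] at hcq
    exact hcq
  -- count the U-side family
  have hrA : r ≤ FU.card :=
    count_le_of_PIfam eU heU hδ hfinU σ ε (fun l => hμβ (q l)) u hPIU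
  omega

end Core
section Main

variable {k : Type v} [Field k]

lemma exists_triple_of_long {I : Set ℝ} {δ : ℝ} (hδ : 0 < δ)
    (h : ENNReal.ofReal (2 * δ) < EMetric.diam I) :
    ∃ a b : ℝ, a ∈ I ∧ b ∈ I ∧ 2 * δ < b - a := by
  have h1 : ¬ (EMetric.diam I ≤ ENNReal.ofReal (2 * δ)) := not_le.2 h
  rw [show EMetric.diam I = Metric.ediam I from rfl, Metric.ediam_le_iff] at h1
  push_neg at h1
  obtain ⟨p, hp, q, hq, hpq⟩ := h1
  rw [edist_dist, Real.dist_eq,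
    ENNReal.ofReal_lt_ofReal_iff_of_nonneg (by linarith)] at hpq
  rcases le_total p q with hle | hle
  · refine ⟨p, q, hp, hq, ?_⟩
    rcases abs_cases (p - q) with ⟨he, _⟩ | ⟨he, _⟩ <;> linarith
  · refine ⟨q, p, hq, hp, ?_⟩
    rcases abs_cases (p - q) with ⟨he, _⟩ | ⟨he, _⟩ <;> linarith

lemma finset_bound
    {U : PersistenceModule.{u} k} {V : PersistenceModule.{u'} k} {W : PersistenceModule.{u''} k}
    (f : ∀ t : ℝ, U.V t →ₗ[k] V.V t) (g : ∀ t : ℝ, V.V t →ₗ[k] W.V t)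
    (hf : ∀ ⦃s t : ℝ⦄ (h : s ≤ t) (x : U.V s), f t (U.map h x) = V.map h (f s x))
    (hg : ∀ ⦃s t : ℝ⦄ (h : s ≤ t) (x : V.V s), g t (V.map h x) = W.map h (g s x))
    (hexact : ∀ t : ℝ, LinearMap.range (f t) = LinearMap.ker (g t))
    {ιU : Type w} {IU : ιU → Set ℝ} {hIU : ∀ i, (IU i).OrdConnected}
    (eU : ∀ t : ℝ, U.V t ≃ₗ[k] (barcodeModule k IU hIU).V t)
    (heU : ∀ ⦃s t : ℝ⦄ (h : s ≤ t) (x : U.V s),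
      eU t (U.map h x) = (barcodeModule k IU hIU).map h (eU s x))
    {ιV : Type w'} {IV : ιV → Set ℝ} {hIV : ∀ i, (IV i).OrdConnected}
    (eV : ∀ t : ℝ, V.V t ≃ₗ[k] (barcodeModule k IV hIV).V t)
    (heV : ∀ ⦃s t : ℝ⦄ (h : s ≤ t) (x : V.V s),
      eV t (V.map h x) = (barcodeModule k IV hIV).map h (eV s x))
    {ιW : Type w''} {IW : ιW → Set ℝ} {hIW : ∀ i, (IW i).OrdConnected}
    (eW : ∀ t : ℝ, W.V t ≃ₗ[k] (barcodeModule k IW hIW).V t)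
    (heW : ∀ ⦃s t : ℝ⦄ (h : s ≤ t) (x : W.V s),
      eW t (W.map h x) = (barcodeModule k IW hIW).map h (eW s x))
    {δ : ℝ} (hδ : 0 < δ)
    (hfinU : {j : ιU | ENNReal.ofReal δ < EMetric.diam (IU j)}.Finite)
    (hfinW : {j : ιW | ENNReal.ofReal δ < EMetric.diam (IW j)}.Finite)
    (S : Finset ιV) (hS : ∀ i ∈ S, ENNReal.ofReal (2 * δ) < EMetric.diam (IV i)) :
    S.card ≤ hfinU.toFinset.card + hfinW.toFinset.card := by
  classical
  set m := S.card with hm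
  -- choose witnesses in each long bar
  have hex : ∀ i : ↥S, ∃ ab : ℝ × ℝ, ab.1 ∈ IV (i : ιV) ∧ ab.2 ∈ IV (i : ιV) ∧
      2 * δ < ab.2 - ab.1 := by
    intro i
    obtain ⟨a, b, ha, hb, hab⟩ := exists_triple_of_long hδ (hS (i : ιV) i.2)
    exact ⟨(a, b), ha, hb, hab⟩
  choose ab hab1 hab2 hab3 using hex
  set e0 : Fin m ≃ ↥S := S.equivFin.symm with he0
  set μ0 : ↥S → ℝ := fun i => ((ab i).1 + (ab i).2) / 2 with hμ0
  set perm := Tuple.sort (fun l : Fin m => μ0 (e0 l)) with hperm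
  set idx : Fin m → ιV := fun l => ((e0 (perm l)) : ιV) with hidx
  set α : Fin m → ℝ := fun l => (ab (e0 (perm l))).1 with hα
  set β : Fin m → ℝ := fun l => (ab (e0 (perm l))).2 with hβ
  set μ : Fin m → ℝ := fun l => μ0 (e0 (perm l)) with hμ
  have hμmono : Monotone μ := fun l l' h => Tuple.monotone_sort (fun l : Fin m => μ0 (e0 l)) h
  have hαμ : ∀ l, δ < μ l - α l := by
    intro l
    have := hab3 (e0 (perm l))
    rw [hμ, hα, hμ0]
    dsimp only
    linarith
  have hμβ : ∀ l, δ < β l - μ l := by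
    intro l
    have := hab3 (e0 (perm l))
    rw [hμ, hβ, hμ0]
    dsimp only
    linarith
  have hidxinj : Function.Injective idx := by
    intro l l' h
    rw [hidx] at h
    have h2 : e0 (perm l) = e0 (perm l') := Subtype.coe_injective h
    exact perm.injective (e0.injective h2)
  have hαmem : ∀ l, α l ∈ IV (idx l) := fun l => hab1 (e0 (perm l))
  have hβmem : ∀ l, β l ∈ IV (idx l) := fun l => hab2 (e0 (perm l))
  -- the canonical vectors
  have honemem : ∀ l, (1 : k) ∈ intervalFiber k (IV (idx l)) (α l) := by
    intro l
    rw [intervalFiber, if_pos (hαmem l)]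
    trivial
  set x : ∀ l : Fin m, V.V (α l) := fun l =>
    (eV (α l)).symm (DFinsupp.single (idx l) ⟨1, honemem l⟩) with hx
  -- persistent independence
  have hPI : PIfam V α β x := by
    intro τ c hsum a0 hb0 hw0
    set EyV : ∀ (u : ℝ), V.V u → (Π₀ j : ιV, ↥(intervalFiber k (IV j) u)) :=
      fun u y => eV u y with hEyV
    have hEyx : ∀ l, EyV (α l) (x l) = DFinsupp.single (idx l) ⟨1, honemem l⟩ := by
      intro l
      rw [hEyV, hx]
      dsimp only
      exact (eV (α l)).apply_symm_apply _
    have hτmem : τ ∈ IV (idx a0) :=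
      (hIV (idx a0)).out (hαmem a0) (hβmem a0) ⟨hb0, hw0⟩
    have h0 : eV τ (∑ a, c a • extVec V (α a) (x a) τ) = 0 := by
      rw [hsum, map_zero]
    have h1 : eV τ (∑ a, c a • extVec V (α a) (x a) τ)
        = ∑ a, c a • (eV τ (extVec V (α a) (x a) τ)) := by
      rw [map_sum]
      exact Finset.sum_congr rfl fun a _ => map_smul _ _ _
    rw [h1] at h0
    have h2 : Subtype.val ((∑ a, c a • EyV τ (extVec V (α a) (x a) τ)) (idx a0)) = 0 := by
      have h3 : (∑ a, c a • EyV τ (extVec V (α a) (x a) τ))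
          = (0 : Π₀ j : ιV, ↥(intervalFiber k (IV j) τ)) := h0
      rw [h3]
      simp
    rw [DFinsupp.finset_sum_apply, AddSubmonoidClass.coe_finset_sum] at h2
    -- compute each term
    have hval : ∀ a : Fin m, Subtype.val ((c a • EyV τ (extVec V (α a) (x a) τ)) (idx a0))
        = if a = a0 then c a0 else 0 := by
      intro a
      rw [DFinsupp.smul_apply, SetLike.val_smul, smul_eq_mul]
      by_cases hb : α a ≤ τ
      · have h4 : EyV τ (extVec V (α a) (x a) τ)
            = bmap k IV hIV hb (EyV (α a) (x a)) := by
          rw [hEyV]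
          dsimp only
          rw [extVec_of_le hb, heV hb (x a)]
          rfl
        rw [h4, bmap_val, hEyx a]
        by_cases haa : a = a0
        · subst haa
          rw [if_pos hτmem, if_pos rfl]
          have h5 : (DFinsupp.single (β := fun j => ↥(intervalFiber k (IV j) (α a)))
              (idx a) ⟨1, honemem a⟩) (idx a) = ⟨1, honemem a⟩ :=
            DFinsupp.single_eq_same
          rw [h5]
          exact mul_one (c a)
        · rw [if_neg haa]
          have hne : idx a ≠ idx a0 := fun hcon => haa (hidxinj hcon)
          have h5 : (DFinsupp.single (β := fun j => ↥(intervalFiber k (IV j) (α a)))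
              (idx a) ⟨1, honemem a⟩) (idx a0) = 0 :=
            DFinsupp.single_eq_of_ne (Ne.symm hne)
          rw [if_pos hτmem, h5]
          simp
      · have hca : a ≠ a0 := by
          intro hcon
          subst hcon
          exact hb hb0
        rw [if_neg hca]
        have h4 : EyV τ (extVec V (α a) (x a) τ) = 0 := by
          rw [hEyV]
          dsimp only
          rw [extVec_of_not_le hb, map_zero]
          rfl
        rw [h4]
        simp
    rw [Finset.sum_congr rfl fun a _ => hval a] at h2
    rw [Finset.sum_ite_eq' Finset.univ a0 (fun _ => c a0)] at h2
    rw [if_pos (Finset.mem_univ a0)] at h2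
    exact h2
  exact core_count f g hf hg hexact eU heU eW heW hδ hfinU hfinW α μ β hαμ hμβ hμmono x hPI

end Main
/-- Let `U → V → W` be an exact sequence of persistence modules, each
isomorphic to a direct sum of interval modules.  Then for every `δ > 0`, the number of bars of
`V` of length greater than `2δ` is at most the number of bars of `U` of length greater than
`δ` plus the number of bars of `W` of length greater than `δ`. -/
theorem stmt_9 {k : Type v} [Field k]
    (U V W : PersistenceModule.{u} k)
    (f : ∀ t : ℝ, U.V t →ₗ[k] V.V t) (g : ∀ t : ℝ, V.V t →ₗ[k] W.V t)
    (hf : ∀ ⦃s t : ℝ⦄ (h : s ≤ t) (x : U.V s), f t (U.map h x) = V.map h (f s x))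
    (hg : ∀ ⦃s t : ℝ⦄ (h : s ≤ t) (x : V.V s), g t (V.map h x) = W.map h (g s x))
    (hexact : ∀ t : ℝ, LinearMap.range (f t) = LinearMap.ker (g t))
    {ιU : Type w} {ιV : Type w'} {ιW : Type w''}
    (IU : ιU → Set ℝ) (hIU : ∀ i, (IU i).OrdConnected)
    (IV : ιV → Set ℝ) (hIV : ∀ i, (IV i).OrdConnected)
    (IW : ιW → Set ℝ) (hIW : ∀ i, (IW i).OrdConnected)
    (hU : PersIso U (barcodeModule k IU hIU))
    (hV : PersIso V (barcodeModule k IV hIV))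
    (hW : PersIso W (barcodeModule k IW hIW))
    (δ : ℝ) (hδ : 0 < δ) :
    {i : ιV | ENNReal.ofReal (2 * δ) < EMetric.diam (IV i)}.encard ≤
      {i : ιU | ENNReal.ofReal δ < EMetric.diam (IU i)}.encard +
      {i : ιW | ENNReal.ofReal δ < EMetric.diam (IW i)}.encard := by
  classical
  obtain ⟨eU, heU⟩ := hU
  obtain ⟨eV, heV⟩ := hV
  obtain ⟨eW, heW⟩ := hW
  by_cases hfinU : {i : ιU | ENNReal.ofReal δ < EMetric.diam (IU i)}.Finite
  swap
  · rw [(Set.Infinite.encard_eq hfinU)]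
    rw [top_add]
    exact le_top
  by_cases hfinW : {i : ιW | ENNReal.ofReal δ < EMetric.diam (IW i)}.Finite
  swap
  · rw [(Set.Infinite.encard_eq hfinW)]
    rw [add_top]
    exact le_top
  have hbound : ∀ S : Finset ιV,
      (∀ i ∈ S, ENNReal.ofReal (2 * δ) < EMetric.diam (IV i)) →
      S.card ≤ hfinU.toFinset.card + hfinW.toFinset.card := fun S hSm =>
    finset_bound f g hf hg hexact eU heU eV heV eW heW hδ hfinU hfinW S hSm
  have hfinV : {i : ιV | ENNReal.ofReal (2 * δ) < EMetric.diam (IV i)}.Finite := by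
    by_contra hinf
    obtain ⟨S, hSsub, hScard⟩ := Set.Infinite.exists_subset_card_eq hinf
      (hfinU.toFinset.card + hfinW.toFinset.card + 1)
    have := hbound S (fun i hi => hSsub hi)
    omega
  rw [hfinV.encard_eq_coe_toFinset_card, hfinU.encard_eq_coe_toFinset_card,
    hfinW.encard_eq_coe_toFinset_card]
  rw [← Nat.cast_add]
  exact Nat.cast_le.2 (hbound hfinV.toFinset (fun i hi => hfinV.mem_toFinset.1 hi))
end

section
/- Let f: ℝ → ℝ be a strictly increasing bijection such that t ≤ f(t) ≤ r_0·t for all t ≥ 0 and f(t) = t for t < 0, for some constant r_0 ≥ 1. Let B be a barcode and let act(B, f^{-1}) be the barcode obtained by applying f to all endpoints of bars of B. Then for every ε > 0 and T > 0: n_{r_0·ε}(tru(act(B, f^{-1}), f(T))) ≤ n_ε(tru(B, T)) ≤ n_ε(tru(act(B, f^{-1}), f(T))), provided additionally that f(t_2) − f(t_1) ≥ t_2 − t_1 and f(t_2) − f(t_1) ≤ r_0(t_2 − t_1) for all 0 ≤ t_1 ≤ t_2. -/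
open Classical

/-- The extension of a function `f : ℝ → ℝ` to `EReal`, fixing `±∞`. -/
noncomputable def erealMap (f : ℝ → ℝ) : EReal → EReal := fun x =>
  if x = ⊤ then ⊤ else if x = ⊥ then ⊥ else ((f x.toReal : ℝ) : EReal)

/-- Let `f : ℝ → ℝ` be a strictly increasing bijection with `t ≤ f t ≤ r₀·t`
for `t ≥ 0` and `f t = t` for `t < 0`, where `r₀ ≥ 1`, and additionally
`t₂ − t₁ ≤ f t₂ − f t₁ ≤ r₀ (t₂ − t₁)` for `0 ≤ t₁ ≤ t₂`.  Let `B` be a barcode (bars indexed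
by `ι`, with endpoints `a i ∈ ℝ`, `b i ∈ ℝ ∪ {±∞}`) and let `act(B, f⁻¹)` be the barcode with
bars `(f (a i), f (b i)]`.  Then for every `ε > 0` and `T > 0`:
`n_{r₀ ε}(tru(act(B,f⁻¹), f T)) ≤ n_ε(tru(B, T)) ≤ n_ε(tru(act(B,f⁻¹), f T))`. -/
theorem stmt_12 (f : ℝ → ℝ) (r₀ : ℝ) (hr₀ : 1 ≤ r₀)
    (hmono : StrictMono f) (hbij : Function.Bijective f)
    (hneg : ∀ t : ℝ, t < 0 → f t = t)
    (hbound : ∀ t : ℝ, 0 ≤ t → t ≤ f t ∧ f t ≤ r₀ * t)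
    (hlip : ∀ t₁ t₂ : ℝ, 0 ≤ t₁ → t₁ ≤ t₂ →
      t₂ - t₁ ≤ f t₂ - f t₁ ∧ f t₂ - f t₁ ≤ r₀ * (t₂ - t₁))
    {ι : Type*} (a : ι → ℝ) (b : ι → EReal)
    (ε T : ℝ) (hε : 0 < ε) (hT : 0 < T) :
    {i : ι | ((r₀ * ε : ℝ) : EReal) <
        min (erealMap f (b i)) ((f T : ℝ) : EReal) - ((f (a i) : ℝ) : EReal)}.encard ≤
      {i : ι | (ε : EReal) < min (b i) (T : EReal) - (a i : EReal)}.encard ∧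
    {i : ι | (ε : EReal) < min (b i) (T : EReal) - (a i : EReal)}.encard ≤
      {i : ι | (ε : EReal) <
        min (erealMap f (b i)) ((f T : ℝ) : EReal) - ((f (a i) : ℝ) : EReal)}.encard := by
  have hr0pos : (0:ℝ) < r₀ := by linarith
  have L1 : ∀ x y : ℝ, x ≤ y → y - x ≤ f y - f x := by
    intro x y hxy
    rcases le_or_gt 0 x with hx | hx
    · exact (hlip x y hx hxy).1
    · rw [hneg x hx]
      rcases le_or_gt 0 y with hy | hy
      · linarith [(hbound y hy).1]
      · rw [hneg y hy]
  have L2 : ∀ x y : ℝ, x ≤ y → f y - f x ≤ r₀ * (y - x) := by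
    intro x y hxy
    rcases le_or_gt 0 x with hx | hx
    · exact (hlip x y hx hxy).2
    · rw [hneg x hx]
      rcases le_or_gt 0 y with hy | hy
      · nlinarith [(hbound y hy).2]
      · rw [hneg y hy]; nlinarith
  have Fwd : ∀ x m : ℝ, ε < m - x → ε < f m - f x := by
    intro x m h
    have hxm : x ≤ m := by linarith
    linarith [L1 x m hxm]
  have Bwd : ∀ x m : ℝ, r₀ * ε < f m - f x → ε < m - x := by
    intro x m h
    have hxm : x ≤ m := by
      by_contra hc
      push_neg at hc
      have := hmono hc
      nlinarith
    have := L2 x m hxm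
    nlinarith
  have etop : erealMap f ⊤ = ⊤ := by simp [erealMap]
  have ebot : erealMap f ⊥ = ⊥ := by simp [erealMap]
  have ecoe : ∀ r : ℝ, erealMap f (r : EReal) = ((f r : ℝ) : EReal) := by
    intro r; simp [erealMap]
  constructor
  · apply Set.encard_mono
    intro i hi
    simp only [Set.mem_setOf_eq] at hi ⊢
    revert hi
    induction b i using EReal.rec with
    | bot =>
        rw [ebot]
        simp [EReal.bot_sub]
    | coe r =>
        rw [ecoe]
        intro hi
        rw [← EReal.coe_strictMono.monotone.map_min, ← EReal.coe_sub, EReal.coe_lt_coe_iff] at hi ⊢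
        rcases le_total (f r) (f T) with h | h
        · rw [min_eq_left h] at hi
          rw [min_eq_left ((hmono.le_iff_le).mp h)]
          exact Bwd _ _ hi
        · rw [min_eq_right h] at hi
          rw [min_eq_right ((hmono.le_iff_le).mp h)]
          exact Bwd _ _ hi
    | top =>
        rw [etop]
        intro hi
        rw [min_top_left, ← EReal.coe_sub, EReal.coe_lt_coe_iff] at hi
        rw [min_top_left, ← EReal.coe_sub, EReal.coe_lt_coe_iff]
        exact Bwd _ _ hi
  · apply Set.encard_mono
    intro i hi
    simp only [Set.mem_setOf_eq] at hi ⊢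
    revert hi
    induction b i using EReal.rec with
    | bot =>
        simp [EReal.bot_sub]
    | coe r =>
        rw [ecoe]
        intro hi
        rw [← EReal.coe_strictMono.monotone.map_min, ← EReal.coe_sub, EReal.coe_lt_coe_iff] at hi ⊢
        rcases le_total r T with h | h
        · rw [min_eq_left h] at hi
          rw [min_eq_left (hmono.monotone h)]
          exact Fwd _ _ hi
        · rw [min_eq_right h] at hi
          rw [min_eq_right (hmono.monotone h)]
          exact Fwd _ _ hi
    | top =>
        rw [etop]
        intro hi
        rw [min_top_left, ← EReal.coe_sub, EReal.coe_lt_coe_iff] at hi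
        rw [min_top_left, ← EReal.coe_sub, EReal.coe_lt_coe_iff]
        exact Fwd _ _ hi
end

section
/- Let (V, ℓ) be an orthogonalizable non-Archimedean normed vector space with a norm-nonincreasing differential ∂ (∂² = 0, ℓ(∂v) ≤ ℓ(v)), and let {x_1,…,x_N, y_1,…,y_M, z_1,…,z_M} be a singular value decomposition basis (orthogonal, ∂x_i = 0, ∂z_j = y_j). Suppose {w_1,…,w_{N+2M}} is any other orthogonal basis of V. Then the multiset of values {ℓ(x_i)} ∪ {ℓ(y_j)} ∪ {ℓ(z_j)} equals the multiset {ℓ(w_k)}. -/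
open Classical

noncomputable section Aux17

variable {k V : Type*} [Field k] [AddCommGroup V] [Module k V]

/-- The subspace of vectors of norm `≤ t`. -/
def levelSub17 (ℓ : V → EReal)
    (hbot : ∀ x : V, ℓ x = ⊥ ↔ x = 0)
    (hsmul : ∀ (a : k) (x : V), a ≠ 0 → ℓ (a • x) = ℓ x)
    (hadd : ∀ x y : V, ℓ (x + y) ≤ max (ℓ x) (ℓ y)) (t : EReal) : Submodule k V where
  carrier := {v | ℓ v ≤ t}
  zero_mem' := by
    show ℓ 0 ≤ t
    rw [(hbot 0).mpr rfl]; exact bot_le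
  add_mem' := fun ha hb => le_trans (hadd _ _) (max_le ha hb)
  smul_mem' := by
    intro a x hx
    by_cases h : a = 0
    · show ℓ (a • x) ≤ t
      rw [h, zero_smul, (hbot 0).mpr rfl]; exact bot_le
    · show ℓ (a • x) ≤ t
      rw [hsmul a x h]; exact hx

lemma card_filter_eq_finrank17 {ι : Type*} [Fintype ι]
    (ℓ : V → EReal)
    (hbot : ∀ x : V, ℓ x = ⊥ ↔ x = 0)
    (hsmul : ∀ (a : k) (x : V), a ≠ 0 → ℓ (a • x) = ℓ x)
    (hadd : ∀ x y : V, ℓ (x + y) ≤ max (ℓ x) (ℓ y))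
    (e : ι → V)
    (hli : LinearIndependent k e)
    (hsp : Submodule.span k (Set.range e) = ⊤)
    (horth : ∀ a : ι → k, ℓ (∑ i, a i • e i) =
        (Finset.univ.filter fun i => a i ≠ 0).sup fun i => ℓ (a i • e i))
    (t : EReal) :
    (Finset.univ.filter fun i => ℓ (e i) ≤ t).card =
      Module.finrank k (levelSub17 ℓ hbot hsmul hadd t) := by
  have hspan : levelSub17 ℓ hbot hsmul hadd t
      = Submodule.span k (Set.range (e ∘ (Subtype.val : {i // ℓ (e i) ≤ t} → ι))) := by
    apply le_antisymm
    · intro v hv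
      let B : Module.Basis ι k V := Module.Basis.mk hli hsp.ge
      have hBe : ∀ i, B i = e i := fun i => Module.Basis.mk_apply hli hsp.ge i
      set a : ι → k := fun i => B.repr v i with ha
      have hrep : ∑ i, a i • e i = v := by
        have := B.sum_repr v
        simpa only [hBe] using this
      have hle : ∀ i, a i ≠ 0 → ℓ (e i) ≤ t := by
        intro i hi
        have h1 : ℓ (a i • e i) ≤ ℓ (∑ j, a j • e j) := by
          rw [horth a]
          have hmem : i ∈ Finset.univ.filter (fun j => a j ≠ 0) :=
            Finset.mem_filter.mpr ⟨Finset.mem_univ i, hi⟩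
          exact Finset.le_sup (f := fun j => ℓ (a j • e j)) hmem
        rw [hsmul _ _ hi] at h1
        exact le_trans h1 (by rwa [hrep])
      rw [← hrep]
      refine Submodule.sum_mem _ fun i _ => ?_
      by_cases hi : a i = 0
      · rw [hi, zero_smul]; exact Submodule.zero_mem _
      · exact Submodule.smul_mem _ _
          (Submodule.subset_span ⟨⟨i, hle i hi⟩, rfl⟩)
    · rw [Submodule.span_le]
      rintro _ ⟨⟨i, hi⟩, rfl⟩
      exact hi
  rw [hspan, finrank_span_eq_card (hli.comp (Subtype.val : {i // ℓ (e i) ≤ t} → ι)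
      Subtype.val_injective)]
  rw [Fintype.card_subtype]

lemma multiset_eq_of_card_filter_le17 (A B : Multiset EReal)
    (h : ∀ t, (A.filter (· ≤ t)).card = (B.filter (· ≤ t)).card) : A = B := by
  have key : ∀ (C : Multiset EReal) (v : EReal),
      (C.filter (· ≤ v)).card = (C.filter (· < v)).card + (C.filter (v = ·)).card := by
    intro C v
    have hff := Multiset.filter_add_filter (p := (· < v)) (q := (v = ·)) (s := C)
    have h1 : C.filter (fun x => x < v ∨ v = x) = C.filter (· ≤ v) := by
      apply Multiset.filter_congr
      intro x _
      constructor
      · rintro (h | rfl) <;> [exact le_of_lt h; exact le_rfl]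
      · intro hx
        rcases lt_or_eq_of_le hx with h | h
        · exact Or.inl h
        · exact Or.inr h.symm
    have h2 : C.filter (fun x => x < v ∧ v = x) = 0 := by
      rw [Multiset.filter_eq_nil]
      intro a _ hx
      obtain ⟨h1', h2'⟩ := hx
      subst h2'
      exact lt_irrefl _ h1'
    rw [h1, h2, add_zero] at hff
    rw [← hff, Multiset.card_add]
  ext v
  have hlt : (A.filter (· < v)).card = (B.filter (· < v)).card := by
    by_cases hS : ∀ u ∈ A + B, ¬ u < v
    · rw [Multiset.filter_eq_nil.mpr fun a ha => hS a (Multiset.mem_add.mpr (Or.inl ha)),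
        Multiset.filter_eq_nil.mpr fun a ha => hS a (Multiset.mem_add.mpr (Or.inr ha))]
    · push_neg at hS
      obtain ⟨u0, hu0, hu0v⟩ := hS
      set T := (A + B).toFinset.filter (· < v) with hT
      have hTne : T.Nonempty := ⟨u0, Finset.mem_filter.mpr ⟨Multiset.mem_toFinset.mpr hu0, hu0v⟩⟩
      set t := T.max' hTne with ht
      have htv : t < v := (Finset.mem_filter.mp (T.max'_mem hTne)).2
      have hcongr : ∀ (C : Multiset EReal), C ≤ A + B →
          C.filter (· < v) = C.filter (· ≤ t) := by
        intro C hC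
        apply Multiset.filter_congr
        intro a haC
        constructor
        · intro hav
          exact T.le_max' a (Finset.mem_filter.mpr
            ⟨Multiset.mem_toFinset.mpr (Multiset.mem_of_le hC haC), hav⟩)
        · intro hat
          exact lt_of_le_of_lt hat htv
      rw [hcongr A (Multiset.le_add_right A B), hcongr B (Multiset.le_add_left B A)]
      exact h t
  have hA := key A v
  have hB := key B v
  have hv := h v
  rw [Multiset.count_eq_card_filter_eq, Multiset.count_eq_card_filter_eq]
  omega

end Aux17

/-- Let `(V, ℓ)` be an orthogonalizable non-Archimedean normed vector space
with a norm-nonincreasing differential `∂` (`∂² = 0`, `ℓ(∂v) ≤ ℓ(v)`), and let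
`{x_1,…,x_N, y_1,…,y_M, z_1,…,z_M}` be a singular value decomposition basis (orthogonal,
`∂ x_i = 0`, `∂ z_j = y_j`).  If `{w_1,…,w_{N+2M}}` is any other orthogonal basis of `V`,
then the multiset of values `{ℓ x_i} ∪ {ℓ y_j} ∪ {ℓ z_j}` equals the multiset `{ℓ w_k}`. -/
theorem stmt_17 {k V : Type*} [Field k] [AddCommGroup V] [Module k V]
    (ℓ : V → EReal)
    (hbot : ∀ x : V, ℓ x = ⊥ ↔ x = 0)
    (hsmul : ∀ (a : k) (x : V), a ≠ 0 → ℓ (a • x) = ℓ x)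
    (hadd : ∀ x y : V, ℓ (x + y) ≤ max (ℓ x) (ℓ y))
    (D : V →ₗ[k] V)
    (hDD : ∀ v : V, D (D v) = 0)
    (hDℓ : ∀ v : V, ℓ (D v) ≤ ℓ v)
    {N M : ℕ} (x : Fin N → V) (y z : Fin M → V)
    (hDx : ∀ i, D (x i) = 0) (hDz : ∀ j, D (z j) = y j)
    -- the combined family is an orthogonal basis of V
    (hli : LinearIndependent k (Sum.elim x (Sum.elim y z)))
    (hsp : Submodule.span k (Set.range (Sum.elim x (Sum.elim y z))) = ⊤)
    (horth : ∀ a : Fin N ⊕ (Fin M ⊕ Fin M) → k,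
      ℓ (∑ i, a i • Sum.elim x (Sum.elim y z) i) =
        (Finset.univ.filter fun i => a i ≠ 0).sup
          fun i => ℓ (a i • Sum.elim x (Sum.elim y z) i))
    -- another orthogonal basis
    (w : Fin (N + 2 * M) → V)
    (hwli : LinearIndependent k w)
    (hwsp : Submodule.span k (Set.range w) = ⊤)
    (hworth : ∀ a : Fin (N + 2 * M) → k,
      ℓ (∑ i, a i • w i) =
        (Finset.univ.filter fun i => a i ≠ 0).sup fun i => ℓ (a i • w i)) :
    ((List.ofFn fun i => ℓ (x i)) ++ (List.ofFn fun j => ℓ (y j)) ++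
        (List.ofFn fun j => ℓ (z j)) : Multiset EReal) =
      ((List.ofFn fun i => ℓ (w i)) : Multiset EReal) := by
  classical
  set E : Fin N ⊕ (Fin M ⊕ Fin M) → V := Sum.elim x (Sum.elim y z) with hE
  have hA : ((List.ofFn fun i => ℓ (x i)) ++ (List.ofFn fun j => ℓ (y j)) ++
        (List.ofFn fun j => ℓ (z j)) : Multiset EReal) =
      Multiset.map (fun s => ℓ (E s)) Finset.univ.val := by
    rw [show (Finset.univ : Finset (Fin N ⊕ (Fin M ⊕ Fin M))) =
        Finset.univ.disjSum Finset.univ from (Finset.univ_disjSum_univ).symm,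
      Finset.val_disjSum,
      show (Finset.univ : Finset (Fin M ⊕ Fin M)) =
        Finset.univ.disjSum Finset.univ from (Finset.univ_disjSum_univ).symm,
      Finset.val_disjSum]
    simp [Multiset.disjSum, Multiset.map_add, Multiset.map_map, Function.comp, hE,
      add_assoc]
    exact List.Perm.refl _
  have hB : ((List.ofFn fun i => ℓ (w i)) : Multiset EReal) =
      Multiset.map (fun s => ℓ (w s)) Finset.univ.val := by
    simp
  rw [hA, hB]
  apply multiset_eq_of_card_filter_le17
  intro t
  have hmapcard : ∀ {ι : Type} [Fintype ι] (f : ι → V),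
      Multiset.card ((Multiset.map (fun s => ℓ (f s)) Finset.univ.val).filter (· ≤ t))
        = (Finset.univ.filter fun i => ℓ (f i) ≤ t).card := by
    intro ι _ f
    rw [← Multiset.countP_eq_card_filter, Multiset.countP_map]
    rfl
  rw [hmapcard E, hmapcard w,
    card_filter_eq_finrank17 ℓ hbot hsmul hadd E hli hsp horth t,
    card_filter_eq_finrank17 ℓ hbot hsmul hadd w hwli hwsp hworth t]
end

section
/- Let B and B' be barcodes admitting a δ-matching μ: B → B'. Then for every ε > 2δ and every T: n_{ε}(tru(B', T)) ≥ n_{ε + 2δ}(tru(B, T + δ)) − (number of bars of B of length > ε + 2δ not in the coimage of μ), and in particular if the coimage of μ contains all bars of B of length > 2δ, then n_{ε+2δ}(tru(B, T+δ)) ≤ n_ε(tru(B', T + 2δ)). -/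
/-- Let `B` and `B'` be barcodes (bars indexed by `ι`, `ι'`, with left
endpoints `a, c` and right endpoints `b, d`) admitting a `δ`-matching `μ` (a partial
bijection, with coimage `S` and image `S'`, whose coimage/image contain all bars of length
`> 2δ` and whose matched bars lie in each other's `δ`-expansions).  Then for every `ε > 2δ`
and every `T`:
`n_{ε+2δ}(tru(B, T+δ)) − #{bars of B of length > ε+2δ not in the coimage} ≤ n_ε(tru(B', T))`,
and moreover `n_{ε+2δ}(tru(B, T+δ)) ≤ n_ε(tru(B', T+2δ))`. -/
theorem stmt_18 {ι ι' : Type*}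
    (a : ι → ℝ) (b : ι → EReal) (c : ι' → ℝ) (d : ι' → EReal)
    (δ : ℝ) (hδ : 0 < δ)
    (S : Set ι) (S' : Set ι') (e : ι → ι') (he : Set.BijOn e S S')
    (hcoim : ∀ i : ι, ((2 * δ : ℝ) : EReal) < b i - (a i : EReal) → i ∈ S)
    (him : ∀ j : ι', ((2 * δ : ℝ) : EReal) < d j - (c j : EReal) → j ∈ S')
    (hmatch : ∀ i ∈ S,
      c (e i) - δ ≤ a i ∧ a i - δ ≤ c (e i) ∧
      b i ≤ d (e i) + (δ : EReal) ∧ d (e i) ≤ b i + (δ : EReal))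
    (ε T : ℝ) (hε : 2 * δ < ε) :
    {i : ι | ((ε + 2 * δ : ℝ) : EReal) <
        min (b i) ((T + δ : ℝ) : EReal) - (a i : EReal)}.encard -
      {i : ι | ((ε + 2 * δ : ℝ) : EReal) < b i - (a i : EReal) ∧ i ∉ S}.encard ≤
        {j : ι' | (ε : EReal) < min (d j) (T : EReal) - (c j : EReal)}.encard ∧
    {i : ι | ((ε + 2 * δ : ℝ) : EReal) <
        min (b i) ((T + δ : ℝ) : EReal) - (a i : EReal)}.encard ≤
      {j : ι' | (ε : EReal) < min (d j) ((T + 2 * δ : ℝ) : EReal) - (c j : EReal)}.encard := by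
  set A : Set ι := {i : ι | ((ε + 2 * δ : ℝ) : EReal) <
      min (b i) ((T + δ : ℝ) : EReal) - (a i : EReal)} with hA
  -- every i in A satisfies the long-bar condition
  have hAlong : ∀ i ∈ A, ((ε + 2 * δ : ℝ) : EReal) < b i - (a i : EReal) := by
    intro i hi
    exact lt_of_lt_of_le hi (EReal.sub_le_sub (min_le_left _ _) le_rfl)
  -- key: for i ∈ A ∩ S, the matched bar is long after either truncation
  have key : ∀ i ∈ A, i ∈ S → ∀ V : ℝ, T ≤ V →
      (ε : EReal) < min (d (e i)) (V : EReal) - (c (e i) : EReal) := by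
    intro i hi hiS V hV
    obtain ⟨h1, h2, h3, h4⟩ := hmatch i hiS
    have hi' : ((ε + 2 * δ + a i : ℝ) : EReal) < min (b i) ((T + δ : ℝ) : EReal) := by
      rw [show ((ε + 2 * δ + a i : ℝ) : EReal) = ((ε + 2 * δ : ℝ) : EReal) + (a i : ℝ) by
        push_cast; ring]
      exact (EReal.lt_sub_iff_add_lt (Or.inl (EReal.coe_ne_bot _))
        (Or.inl (EReal.coe_ne_top _))).mp hi
    rw [EReal.lt_sub_iff_add_lt (Or.inl (EReal.coe_ne_bot _)) (Or.inl (EReal.coe_ne_top _))]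
    rw [show ((ε : ℝ) : EReal) + (c (e i) : EReal) = ((ε + c (e i) : ℝ) : EReal) by push_cast; ring]
    rw [lt_min_iff] at hi' ⊢
    obtain ⟨hb, hT⟩ := hi'
    have hT' : ε + 2 * δ + a i < T + δ := by exact_mod_cast hT
    have hc : c (e i) ≤ a i + δ := by linarith [sub_le_iff_le_add.mp h2]
    constructor
    · -- ε + c (e i) < d (e i)
      have : ((ε + 2 * δ + a i : ℝ) : EReal) < d (e i) + (δ : EReal) := lt_of_lt_of_le hb h3
      have h5 : ((ε + 2 * δ + a i : ℝ) : EReal) - (δ : EReal) < d (e i) :=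
        EReal.sub_lt_of_lt_add this
      have h6 : ((ε + δ + a i : ℝ) : EReal) < d (e i) := by
        rw [show ((ε + δ + a i : ℝ) : EReal) = ((ε + 2 * δ + a i : ℝ) : EReal) - (δ : EReal) by
          rw [← EReal.coe_sub]; norm_cast; ring]
        exact h5
      refine lt_of_le_of_lt ?_ h6
      exact_mod_cast (by linarith : ε + c (e i) ≤ ε + δ + a i)
    · exact_mod_cast (by linarith : ε + c (e i) < V)
  have hinj : Set.InjOn e S := he.injOn
  refine ⟨?_, ?_⟩
  · -- first part
    set Bad : Set ι := {i : ι | ((ε + 2 * δ : ℝ) : EReal) < b i - (a i : EReal) ∧ i ∉ S}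
    rw [tsub_le_iff_right]
    calc A.encard ≤ ((A ∩ S) ∪ Bad).encard := by
          apply Set.encard_le_encard
          intro i hi
          by_cases hiS : i ∈ S
          · exact Or.inl ⟨hi, hiS⟩
          · exact Or.inr ⟨hAlong i hi, hiS⟩
      _ ≤ (A ∩ S).encard + Bad.encard := Set.encard_union_le _ _
      _ ≤ _ + Bad.encard := by
          gcongr
          rw [← (hinj.mono Set.inter_subset_right).encard_image]
          apply Set.encard_le_encard
          rintro _ ⟨i, ⟨hiA, hiS⟩, rfl⟩
          exact key i hiA hiS T le_rfl
  · -- second part: A ⊆ S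
    have hAS : ∀ i ∈ A, i ∈ S := fun i hi =>
      hcoim i (lt_trans (by exact_mod_cast (by linarith : 2 * δ < ε + 2 * δ)) (hAlong i hi))
    rw [← (hinj.mono hAS).encard_image]
    apply Set.encard_le_encard
    rintro _ ⟨i, hiA, rfl⟩
    exact key i hiA (hAS i hiA) (T + 2 * δ) (by linarith)
end
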